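/- arXiv:0708.1363 — 5 statements merged into one kernel-verified Lean document; each statement's English description precedes it below -/
import Mathlib

section
/- Let k be a field of characteristic zero and n ≥ 1. If X ∈ sp_{2n}(k) is nilpotent, then every odd part of the Jordan type of X occurs with even multiplicity. -/
open Matrix

/-- The standard symplectic matrix `J = [[0, I_n], [-I_n, 0]]` as a `2n × 2n` matrix. -/
def sympJ (k : Type) [Field k] (n : ℕ) : Matrix (Fin (2 * n)) (Fin (2 * n)) k :=
  fun i j =>
    if (i : ℕ) + n = (j : ℕ) then 1
    else if (j : ℕ) + n = (i : ℕ) then -1 else 0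

/-- `X` has Jordan type `μ`: for every `j ≥ 1`, the multiplicity of `j` as a part of `μ`
is `rank(X^(j-1)) - 2 rank(X^j) + rank(X^(j+1))`. -/
def HasJordanType (k : Type) [Field k] {N : ℕ} (X : Matrix (Fin N) (Fin N) k)
    (μ : Nat.Partition N) : Prop :=
  ∀ j : ℕ, 1 ≤ j →
    (μ.parts.count j : ℤ) =
      ((X ^ (j - 1)).rank : ℤ) - 2 * ((X ^ j).rank : ℤ) + ((X ^ (j + 1)).rank : ℤ)

/-- A skew-symmetric matrix over a field of characteristic zero has even rank. -/
lemma skew_rank_even {k : Type} [Field k] [CharZero k] {N : ℕ}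
    (A : Matrix (Fin N) (Fin N) k) (hA : Aᵀ = -A) : Even A.rank := by
  classical
  set B : LinearMap.BilinForm k (Fin N → k) := Matrix.toBilin' A with hB
  have hskew : ∀ x y, B x y = - B y x := by
    intro x y
    rw [hB, Matrix.toBilin'_apply', Matrix.toBilin'_apply']
    rw [Matrix.dotProduct_mulVec, ← Matrix.mulVec_transpose, hA]
    simp [Matrix.neg_mulVec, dotProduct_comm]
  set K := LinearMap.ker A.mulVecLin with hK
  obtain ⟨W, hW⟩ := K.exists_isCompl
  have hrank : A.rank = Module.finrank k W := by
    have h3 : Module.finrank k (Fin N → k) = N := by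
      rw [Module.finrank_pi k, Fintype.card_fin]
    have h1 : A.rank + Module.finrank k K = N := by
      have := LinearMap.finrank_range_add_finrank_ker A.mulVecLin
      rw [h3] at this
      exact this
    have h2 : Module.finrank k K + Module.finrank k W = N := by
      have := Submodule.finrank_add_eq_of_isCompl hW
      rw [h3] at this
      exact this
    omega
  have hBzero : ∀ (x : Fin N → k) (z : Fin N → k), z ∈ K → B x z = 0 := by
    intro x z hz
    rw [hB, Matrix.toBilin'_apply']
    rw [LinearMap.mem_ker] at hz
    rw [show A.mulVec z = A.mulVecLin z from rfl, hz]
    simp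
  have hnd : (B.restrict W).Nondegenerate := by
    refine (LinearMap.IsRefl.nondegenerate_iff_separatingLeft (fun x y h => ?_)).mpr ?_
    · change B x y = 0 at h
      change B y x = 0
      rw [hskew, h, neg_zero]
    intro x hx
    have hall : ∀ y : Fin N → k, B y (x : Fin N → k) = 0 := by
      intro y
      obtain ⟨z, w, hz, hw, rfl⟩ := Submodule.codisjoint_iff_exists_add_eq.mp hW.codisjoint y
      have h1 : B (x : Fin N → k) z = 0 := hBzero _ z hz
      have h2 : B (x : Fin N → k) w = 0 := hx ⟨w, hw⟩
      rw [hskew]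
      simp [h1, h2]
    have hxK : (x : Fin N → k) ∈ K := by
      rw [hK, LinearMap.mem_ker]
      funext i
      have := hall (Pi.single i 1)
      rw [hB, Matrix.toBilin'_apply'] at this
      simpa [dotProduct, Pi.single_apply] using this
    have : (x : Fin N → k) ∈ K ⊓ W := ⟨hxK, x.2⟩
    rw [hW.inf_eq_bot] at this
    exact Subtype.ext (by simpa using this)
  have : FiniteDimensional k W := inferInstance
  set b := Module.finBasis k W with hb
  set M := LinearMap.BilinForm.toMatrix b (B.restrict W) with hM
  have hMskew : Mᵀ = -M := by
    ext i j
    simp only [Matrix.transpose_apply, Matrix.neg_apply, hM, LinearMap.BilinForm.toMatrix_apply]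
    exact hskew _ _
  have hdet : M.det ≠ 0 := by
    rw [hM, ← LinearMap.BilinForm.nondegenerate_iff_det_ne_zero b]
    exact hnd
  have hdim : Even (Module.finrank k W) := by
    by_contra hodd
    rw [Nat.not_even_iff_odd] at hodd
    have h1 : M.det = -M.det := by
      conv_lhs => rw [← Matrix.det_transpose, hMskew]
      rw [Matrix.det_neg, Fintype.card_fin, hodd.neg_one_pow]
      ring
    have h2 : (2:k) * M.det = 0 := by linear_combination h1
    exact hdet ((mul_eq_zero.mp h2).resolve_left two_ne_zero)
  rw [hrank]; exact hdim

lemma sympJ_transpose (k : Type) [Field k] (n : ℕ) : (sympJ k n)ᵀ = -(sympJ k n) := by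
  ext i j
  have hi := i.isLt
  have hj := j.isLt
  simp only [Matrix.transpose_apply, Matrix.neg_apply, sympJ]
  split_ifs <;> first | (exfalso; omega) | ring

lemma sympJ_mul_self (k : Type) [Field k] (n : ℕ) : sympJ k n * sympJ k n = -1 := by
  ext i j
  have hi := i.isLt
  have hj := j.isLt
  rw [Matrix.mul_apply]
  rcases lt_or_ge (i : ℕ) n with h | h
  · have hlt : (i : ℕ) + n < 2 * n := by omega
    rw [Finset.sum_eq_single (⟨(i : ℕ) + n, hlt⟩ : Fin (2 * n))]
    · simp only [sympJ, Matrix.neg_apply, Matrix.one_apply, Fin.ext_iff]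
      split_ifs <;> first | (exfalso; omega) | ring
    · intro b _ hb
      have hbne : (b : ℕ) ≠ (i : ℕ) + n := fun hc => hb (by apply Fin.ext; simpa using hc)
      have hblt := b.isLt
      simp only [sympJ]
      split_ifs <;> first | (exfalso; omega) | ring
    · intro hmem; exact absurd (Finset.mem_univ _) hmem
  · have hlt : (i : ℕ) - n < 2 * n := by omega
    rw [Finset.sum_eq_single (⟨(i : ℕ) - n, hlt⟩ : Fin (2 * n))]
    · simp only [sympJ, Matrix.neg_apply, Matrix.one_apply, Fin.ext_iff]
      split_ifs <;> first | (exfalso; omega) | ring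
    · intro b _ hb
      have hbne : (b : ℕ) ≠ (i : ℕ) - n := fun hc => hb (by apply Fin.ext; simpa using hc)
      have hblt := b.isLt
      simp only [sympJ]
      split_ifs <;> first | (exfalso; omega) | ring
    · intro hmem; exact absurd (Finset.mem_univ _) hmem

/-- If `X ∈ sp_{2n}(k)` is nilpotent (char k = 0), then every odd part of the Jordan
type of `X` occurs with even multiplicity. -/
theorem stmt2 (k : Type) [Field k] [CharZero k] (n : ℕ) (hn : 1 ≤ n)
    (X : Matrix (Fin (2 * n)) (Fin (2 * n)) k)
    (hsp : Xᵀ * sympJ k n + sympJ k n * X = 0)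
    (hX : IsNilpotent X)
    (μ : Nat.Partition (2 * n)) (hμ : HasJordanType k X μ) :
    ∀ j : ℕ, Odd j → Even (μ.parts.count j) := by
  set J := sympJ k n with hJdef
  have hsp' : Xᵀ * J = -(J * X) := by
    rw [eq_neg_iff_add_eq_zero]
    exact hsp
  have hpow : ∀ m : ℕ, (X ^ m)ᵀ * J = ((-1 : k) ^ m) • (J * X ^ m) := by
    intro m
    induction m with
    | zero => simp
    | succ m ih =>
      have h1 : (X ^ (m + 1))ᵀ = Xᵀ * (X ^ m)ᵀ := by
        rw [pow_succ, Matrix.transpose_mul]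
      rw [h1, Matrix.mul_assoc, ih, Matrix.mul_smul, ← Matrix.mul_assoc, hsp',
        Matrix.neg_mul, Matrix.mul_assoc, ← pow_succ']
      rw [pow_succ (-1 : k) m, smul_neg, ← neg_smul]
      congr 1
      ring
  have hrank_even : ∀ m : ℕ, Even m → Even ((X ^ m).rank) := by
    intro m hm
    have hskewA : (J * X ^ m)ᵀ = -(J * X ^ m) := by
      rw [Matrix.transpose_mul, hJdef, sympJ_transpose, Matrix.mul_neg, ← hJdef]
      rw [show (X ^ m)ᵀ * J = ((-1 : k) ^ m) • (J * X ^ m) from hpow m, hm.neg_one_pow]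
      simp
    have heq : (J * X ^ m).rank = (X ^ m).rank := by
      apply le_antisymm (Matrix.rank_mul_le_right J (X ^ m))
      have h2 : (-J) * (J * X ^ m) = X ^ m := by
        rw [← Matrix.mul_assoc, Matrix.neg_mul, hJdef, sympJ_mul_self]
        simp
      calc (X ^ m).rank = ((-J) * (J * X ^ m)).rank := by rw [h2]
        _ ≤ (J * X ^ m).rank := Matrix.rank_mul_le_right _ _
    rw [← heq]
    exact skew_rank_even _ hskewA
  intro j hj
  have hj1 : 1 ≤ j := hj.pos
  have hcount := hμ j hj1
  have he1 : Even ((X ^ (j - 1)).rank : ℤ) := by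
    exact_mod_cast (hrank_even (j - 1) (by rcases hj with ⟨c, hc⟩; exact ⟨c, by omega⟩)).natCast
  have he3 : Even ((X ^ (j + 1)).rank : ℤ) := by
    exact_mod_cast (hrank_even (j + 1) (by rcases hj with ⟨c, hc⟩; exact ⟨c + 1, by omega⟩)).natCast
  have : Even ((μ.parts.count j : ℤ)) := by
    rw [hcount]
    rcases he1 with ⟨a, ha⟩
    rcases he3 with ⟨c, hc⟩
    exact ⟨a - ((X ^ j).rank : ℤ) + c, by rw [ha, hc]; ring⟩
  exact_mod_cast this
end

section
/- Let k be a field of characteristic zero and n ≥ 1, and let λ be a partition of 2n in which every odd part occurs with even multiplicity. Then there exists a nilpotent matrix X ∈ sp_{2n}(k) whose Jordan type is λ. -/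
open Matrix

namespace Stmt3Aux

variable {k : Type} [Field k] {N : Type} [Fintype N] [DecidableEq N]

def shiftMat (σ : N → Option N) (c : N → k) : Matrix N N k :=
  fun a b => if σ b = some a then c b else 0

def iterO (σ : N → Option N) : ℕ → N → Option N
  | 0, b => some b
  | j+1, b => (σ b).bind (iterO σ j)

@[simp] lemma iterO_zero (σ : N → Option N) (b : N) : iterO σ 0 b = some b := rfl
lemma iterO_succ (σ : N → Option N) (j : ℕ) (b : N) :
    iterO σ (j+1) b = (σ b).bind (iterO σ j) := rfl

lemma pow_shiftMat (σ : N → Option N) (c : N → k) (hc : ∀ b, c b ≠ 0) (j : ℕ) :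
    ∃ d : N → k, (∀ b, d b ≠ 0) ∧
      ∀ a b, (shiftMat σ c ^ j) a b = if iterO σ j b = some a then d b else 0 := by
  induction j with
  | zero =>
    refine ⟨fun _ => 1, fun _ => one_ne_zero, ?_⟩
    intro a b
    simp [Matrix.one_apply, eq_comm]
  | succ j ih =>
    obtain ⟨d, hd, hXj⟩ := ih
    refine ⟨fun b => (σ b).elim 1 (fun b' => d b' * c b), ?_, ?_⟩
    · intro b
      cases hb : σ b with
      | none => simp [hb]
      | some b' => simp only [hb, Option.elim]; exact mul_ne_zero (hd b') (hc b)
    · intro a b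
      rw [pow_succ, Matrix.mul_apply]
      cases hb : σ b with
      | none =>
        rw [iterO_succ, hb]
        simp [shiftMat, hb]
      | some b' =>
        rw [iterO_succ, hb]
        rw [Finset.sum_eq_single b']
        · simp only [hb, Option.elim, Option.bind]
          rw [hXj a b']
          simp only [shiftMat, hb, Option.some.injEq]
          simp only [eq_self_iff_true, ite_true]
          split_ifs <;> ring
        · intro l _ hl
          have : shiftMat σ c l b = 0 := by
            simp only [shiftMat, hb, Option.some.injEq]
            exact if_neg (fun h => hl h.symm)
          rw [this, mul_zero]
        · simp

lemma iterO_inj (σ : N → Option N)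
    (hσ : ∀ a b b', σ b = some a → σ b' = some a → b = b') :
    ∀ j a b b', iterO σ j b = some a → iterO σ j b' = some a → b = b' := by
  intro j
  induction j with
  | zero => intro a b b' h h'; simp at h h'; rw [h, h']
  | succ j ih =>
    intro a b b' h h'
    rw [iterO_succ] at h h'
    cases hb : σ b with
    | none => rw [hb] at h; simp at h
    | some c1 =>
      cases hb' : σ b' with
      | none => rw [hb'] at h'; simp at h'
      | some c2 =>
        rw [hb] at h; rw [hb'] at h'
        simp only [Option.bind] at h h'
        have := ih a c1 c2 h h'
        exact hσ c1 b b' hb (this ▸ hb')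

lemma rank_of_shift (τ : N → Option N) (d : N → k) (hd : ∀ b, d b ≠ 0)
    (hinj : ∀ a b b', τ b = some a → τ b' = some a → b = b')
    (M : Matrix N N k) (hM : ∀ a b, M a b = if τ b = some a then d b else 0) :
    M.rank = (Finset.univ.filter fun b => (τ b).isSome).card := by
  classical
  let f : {b : N // (τ b).isSome} → (N → k) := fun b => Mᵀ b.1
  have hli : LinearIndependent k f := by
    rw [Fintype.linearIndependent_iff]
    intro g hg b0
    obtain ⟨a0, ha0⟩ := Option.isSome_iff_exists.mp b0.2
    have h2 := congrFun hg a0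
    simp only [Finset.sum_apply, Pi.smul_apply, Pi.zero_apply, smul_eq_mul] at h2
    rw [Finset.sum_eq_single b0] at h2
    · have : f b0 a0 = d b0.1 := by
        simp only [f, Matrix.transpose_apply, hM, ha0]
        exact if_pos trivial
      rw [this] at h2
      exact (mul_eq_zero.mp h2).resolve_right (hd _)
    · intro b _ hb
      have : f b a0 = 0 := by
        simp only [f, Matrix.transpose_apply, hM]
        refine if_neg (fun h => hb ?_)
        exact Subtype.ext (hinj a0 b.1 b0.1 h ha0)
      rw [this, mul_zero]
    · simp
  have hspan : Submodule.span k (Set.range Mᵀ) = Submodule.span k (Set.range f) := by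
    apply le_antisymm
    · rw [Submodule.span_le]
      rintro _ ⟨b, rfl⟩
      by_cases hb : (τ b).isSome
      · exact Submodule.subset_span ⟨⟨b, hb⟩, rfl⟩
      · have hz : Mᵀ b = 0 := by
          ext a
          simp only [Matrix.transpose_apply, hM, Pi.zero_apply]
          rw [Option.not_isSome_iff_eq_none] at hb
          simp [hb]
        rw [hz]
        exact Submodule.zero_mem _
    · rw [Submodule.span_le]
      rintro _ ⟨b, rfl⟩
      exact Submodule.subset_span ⟨b.1, rfl⟩
  rw [M.rank_eq_finrank_span_cols]
  change Module.finrank k ↥(Submodule.span k (Set.range Mᵀ)) = _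
  rw [hspan, finrank_span_eq_card hli]
  simp [Fintype.card_subtype]

lemma iterO_isSome (σ : N → Option N) (life : N → ℕ)
    (h0 : ∀ b, σ b = none → life b = 0)
    (h1 : ∀ b b', σ b = some b' → life b = life b' + 1) :
    ∀ j b, (iterO σ j b).isSome ↔ j ≤ life b := by
  intro j
  induction j with
  | zero => intro b; simp
  | succ j ih =>
    intro b
    rw [iterO_succ]
    cases hb : σ b with
    | none => simp [h0 b hb]
    | some b' =>
      simp only [Option.bind, h1 b b' hb]
      rw [ih b']
      omega



section Pieces

variable (L : List (ℕ × Bool))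

abbrev TT := Σ i : Fin L.length, Fin (L.get i).1

lemma TT_mk_eq {i j : Fin L.length} {a : Fin (L.get i).1} {b : Fin (L.get j).1} :
    (⟨i, a⟩ : TT L) = ⟨j, b⟩ ↔ i = j ∧ (a : ℕ) = (b : ℕ) := by
  constructor
  · intro h
    obtain ⟨h1, h2⟩ := Sigma.mk.inj_iff.mp h
    exact ⟨h1, (Fin.heq_ext_iff (by rw [h1])).mp h2⟩
  · rintro ⟨rfl, h⟩
    exact congrArg _ (Fin.ext h)

def sig : TT L ⊕ TT L → Option (TT L ⊕ TT L)
  | Sum.inl ⟨i, a⟩ =>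
      if h : (a : ℕ) + 1 < (L.get i).1 then some (Sum.inl ⟨i, ⟨(a : ℕ) + 1, h⟩⟩)
      else if (L.get i).2 then some (Sum.inr ⟨i, a⟩) else none
  | Sum.inr ⟨i, a⟩ =>
      if 0 < (a : ℕ) then
        some (Sum.inr ⟨i, ⟨(a : ℕ) - 1, lt_of_le_of_lt (Nat.sub_le _ _) a.isLt⟩⟩)
      else none

def coef : TT L ⊕ TT L → k := Sum.elim (fun _ => 1) (fun _ => -1)

lemma coef_ne_zero : ∀ b, coef (k := k) L b ≠ 0 := by
  rintro (x | x) <;> simp [coef]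

def lifeF : TT L ⊕ TT L → ℕ :=
  Sum.elim
    (fun x => if (L.get x.1).2 then 2 * (L.get x.1).1 - 1 - (x.2 : ℕ)
              else (L.get x.1).1 - 1 - (x.2 : ℕ))
    (fun x => (x.2 : ℕ))

lemma sig_inj : ∀ a b b', sig L b = some a → sig L b' = some a → b = b' := by
  rintro a (⟨i, x⟩ | ⟨i, x⟩) (⟨i', x'⟩ | ⟨i', x'⟩) h h' <;>
    simp only [sig] at h h' <;>
    split_ifs at h h' with h1 h2 h3 h4 <;>
    simp only [Option.some.injEq, reduceCtorEq] at h h' <;>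
    subst h <;>
    have hx := x.isLt <;> have hx' := x'.isLt <;>
    simp only [Sum.inl.injEq, Sum.inr.injEq, reduceCtorEq, TT_mk_eq] at h' <;>
    obtain ⟨rfl, hv⟩ := h' <;>
    simp only [Sum.inl.injEq, Sum.inr.injEq, TT_mk_eq, reduceCtorEq] <;>
    first
      | exact ⟨rfl, by omega⟩
      | exact ⟨trivial, by omega⟩
      | omega

lemma sig_none : ∀ b, sig L b = none → lifeF L b = 0 := by
  rintro (⟨i, a⟩ | ⟨i, a⟩) hb <;> simp only [sig] at hb <;>
    split_ifs at hb with h1 h2 <;>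
    simp only [reduceCtorEq] at hb <;>
    simp only [lifeF, Sum.elim_inl, Sum.elim_inr] <;> have := a.isLt <;>
    first
      | (rw [if_neg h2]; omega)
      | omega

lemma sig_some : ∀ b b', sig L b = some b' → lifeF L b = lifeF L b' + 1 := by
  rintro (⟨i, a⟩ | ⟨i, a⟩) b' hb <;> simp only [sig] at hb <;>
    split_ifs at hb with h1 h2 <;> simp only [Option.some.injEq, reduceCtorEq] at hb <;>
    subst hb <;> simp only [lifeF, Sum.elim_inl, Sum.elim_inr] <;> have := a.isLt <;>
    first
      | (split_ifs <;> omega)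
      | (rw [if_pos h2]; omega)
      | omega

end Pieces

section Count

lemma sum_ite_lt (m K : ℕ) :
    (∑ a ∈ Finset.range m, if a < K then 1 else 0) = min m K := by
  induction m with
  | zero => simp
  | succ m ih => rw [Finset.sum_range_succ, ih]; split_ifs <;> omega

lemma sum_ite_le (m j : ℕ) :
    (∑ a ∈ Finset.range m, if j ≤ a then 1 else 0) = m - j := by
  induction m with
  | zero => simp
  | succ m ih => rw [Finset.sum_range_succ, ih]; split_ifs <;> omega

lemma sum_fin_get {α β : Type*} [AddCommMonoid β] (l : List α) (g : α → β) :
    ∑ i : Fin l.length, g (l.get i) = (l.map g).sum := by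
  conv_rhs => rw [← List.ofFn_get l, List.map_ofFn, List.sum_ofFn]
  rfl

def pieceCount (j : ℕ) (p : ℕ × Bool) : ℕ :=
  if p.2 then 2 * p.1 - j else (p.1 - j) + (p.1 - j)

lemma card_life (L : List (ℕ × Bool)) (j : ℕ) :
    (Finset.univ.filter fun b : TT L ⊕ TT L => j ≤ lifeF L b).card
      = (L.map (pieceCount j)).sum := by
  classical
  rw [Finset.card_filter, Fintype.sum_sum_type]
  rw [← sum_fin_get L (pieceCount j)]
  have h1 : ∀ x : TT L, (if j ≤ lifeF L (Sum.inl x) then (1:ℕ) else 0)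
      = if j ≤ (if (L.get x.1).2 then 2 * (L.get x.1).1 - 1 - (x.2 : ℕ)
          else (L.get x.1).1 - 1 - (x.2 : ℕ)) then 1 else 0 := fun x => rfl
  have h2 : ∀ x : TT L, (if j ≤ lifeF L (Sum.inr x) then (1:ℕ) else 0)
      = if j ≤ (x.2 : ℕ) then 1 else 0 := fun x => rfl
  simp only [h1, h2]
  rw [← Finset.univ_sigma_univ, Finset.sum_sigma, Finset.sum_sigma,
    ← Finset.sum_add_distrib]
  refine Finset.sum_congr rfl fun i _ => ?_
  have e1 : (∑ a : Fin (L.get i).1, if j ≤ (a : ℕ) then (1:ℕ) else 0)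
      = (L.get i).1 - j := by
    rw [Fin.sum_univ_eq_sum_range (fun a => if j ≤ a then (1:ℕ) else 0)]
    exact sum_ite_le _ j
  by_cases hev : (L.get i).2
  · have e2 : (∑ a : Fin (L.get i).1,
        if j ≤ (if (L.get i).2 then 2 * (L.get i).1 - 1 - (a : ℕ)
            else (L.get i).1 - 1 - (a : ℕ)) then (1:ℕ) else 0)
        = min (L.get i).1 (2 * (L.get i).1 - j) := by
      rw [Fin.sum_univ_eq_sum_range
        (fun a => if j ≤ (if (L.get i).2 then 2 * (L.get i).1 - 1 - a
            else (L.get i).1 - 1 - a) then (1:ℕ) else 0)]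
      rw [← sum_ite_lt (L.get i).1 (2 * (L.get i).1 - j)]
      refine Finset.sum_congr rfl fun a ha => ?_
      rw [Finset.mem_range] at ha
      rw [if_pos hev]
      split_ifs <;> omega
    rw [e2, e1]
    simp only [pieceCount, if_pos hev]
    omega
  · have e2 : (∑ a : Fin (L.get i).1,
        if j ≤ (if (L.get i).2 then 2 * (L.get i).1 - 1 - (a : ℕ)
            else (L.get i).1 - 1 - (a : ℕ)) then (1:ℕ) else 0)
        = min (L.get i).1 ((L.get i).1 - j) := by
      rw [Fin.sum_univ_eq_sum_range
        (fun a => if j ≤ (if (L.get i).2 then 2 * (L.get i).1 - 1 - a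
            else (L.get i).1 - 1 - a) then (1:ℕ) else 0)]
      rw [← sum_ite_lt (L.get i).1 ((L.get i).1 - j)]
      refine Finset.sum_congr rfl fun a ha => ?_
      rw [Finset.mem_range] at ha
      rw [if_neg hev]
      split_ifs <;> omega
    rw [e2, e1]
    simp only [pieceCount, if_neg hev]
    omega

end Count

section MS

def pieceM (p : ℕ × Bool) : Multiset ℕ := if p.2 then {2 * p.1} else {p.1, p.1}

lemma pieceM_map_sum (p : ℕ × Bool) (j : ℕ) :
    ((pieceM p).map (· - j)).sum = pieceCount j p := by
  rcases p with ⟨m, _ | _⟩ <;> simp [pieceM, pieceCount]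

lemma sum_map_pieces (L : List (ℕ × Bool)) (j : ℕ) :
    (((L.map pieceM).sum).map (· - j)).sum = (L.map (pieceCount j)).sum := by
  induction L with
  | nil => simp
  | cons p L ih => simp [ih, pieceM_map_sum]

lemma sum_pieces_card (L : List (ℕ × Bool)) :
    ((L.map pieceM).sum).sum = 2 * (L.map Prod.fst).sum := by
  induction L with
  | nil => simp
  | cons p L ih =>
    rcases p with ⟨m, _ | _⟩ <;> simp [pieceM, ih] <;> ring

lemma exists_half (t : Multiset ℕ) (h : ∀ j, Even (t.count j)) :
    ∃ w : Multiset ℕ, t = w + w := by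
  induction t using Multiset.strongInductionOn with
  | ih t ih =>
  rcases Multiset.empty_or_exists_mem t with h0 | ⟨a, ha⟩
  · exact ⟨0, by simp [h0]⟩
  · have h1 : 1 ≤ t.count a := Multiset.one_le_count_iff_mem.mpr ha
    have h2 : 2 ≤ t.count a := by rcases h a with ⟨r, hr⟩; omega
    have hmem' : a ∈ t.erase a := by
      rw [← Multiset.count_pos, Multiset.count_erase_self]; omega
    set t' := (t.erase a).erase a with ht'
    have hte : t = a ::ₘ a ::ₘ t' := by
      rw [ht', Multiset.cons_erase hmem', Multiset.cons_erase ha]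
    have hlt : t' < t :=
      lt_of_le_of_lt (Multiset.erase_le a _) ((Multiset.erase_lt).mpr ha)
    have hcount : ∀ j, Even (t'.count j) := by
      intro j
      by_cases hj : j = a
      · subst hj
        rw [ht', Multiset.count_erase_self, Multiset.count_erase_self]
        rcases h j with ⟨r, hr⟩
        exact ⟨r - 1, by omega⟩
      · rw [ht', Multiset.count_erase_of_ne hj, Multiset.count_erase_of_ne hj]
        exact h j
    obtain ⟨w, hw⟩ := ih t' hlt hcount
    refine ⟨a ::ₘ w, ?_⟩
    rw [hte, hw]
    ext j
    simp only [Multiset.count_cons, Multiset.count_add]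
    split_ifs <;> omega

lemma list_map_singleton (l : List ℕ) :
    ((l.map fun x => ({x} : Multiset ℕ)).sum) = (l : Multiset ℕ) := by
  induction l with
  | nil => simp
  | cons a l ih => simp [ih]

lemma list_map_pair (l : List ℕ) :
    ((l.map fun x => ({x, x} : Multiset ℕ)).sum) = (l : Multiset ℕ) + (l : Multiset ℕ) := by
  induction l with
  | nil => simp
  | cons a l ih =>
    simp only [List.map_cons, List.sum_cons, ih]
    ext j
    simp only [Multiset.count_add, Multiset.insert_eq_cons, ← Multiset.cons_coe,
      Multiset.count_cons, Multiset.count_singleton]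
    split_ifs <;> omega

lemma exists_L (s : Multiset ℕ) (h : ∀ j, ¬ Even j → Even (s.count j)) :
    ∃ L : List (ℕ × Bool), (L.map pieceM).sum = s := by
  classical
  set sE := s.filter (fun x => Even x) with hsE
  set sO := s.filter (fun x => ¬ Even x) with hsO
  have hsplit : sE + sO = s := Multiset.filter_add_not _ s
  have hOcount : ∀ j, Even (sO.count j) := by
    intro j
    by_cases hj : Even j
    · rw [hsO, Multiset.count_filter]
      simp [hj]
    · rw [hsO, Multiset.count_filter, if_pos hj]
      exact h j hj
  obtain ⟨w, hw⟩ := exists_half sO hOcount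
  refine ⟨(sE.toList.map fun x => (x / 2, true)) ++ (w.toList.map fun d => (d, false)), ?_⟩
  rw [List.map_append, List.sum_append]
  have hE : (((sE.toList.map fun x => (x / 2, true)).map pieceM).sum) = sE := by
    rw [List.map_map]
    have : ∀ x ∈ sE.toList, (pieceM ∘ fun x => (x / 2, true)) x = ({x} : Multiset ℕ) := by
      intro x hx
      rw [Multiset.mem_toList, hsE, Multiset.mem_filter] at hx
      simp only [Function.comp, pieceM, if_pos]
      obtain ⟨r, hr⟩ := hx.2
      congr 1
      omega
    rw [List.map_congr_left this, list_map_singleton, Multiset.coe_toList]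
  have hO : (((w.toList.map fun d => (d, false)).map pieceM).sum) = sO := by
    rw [List.map_map]
    have : ∀ x ∈ w.toList, (pieceM ∘ fun d => (d, false)) x = ({x, x} : Multiset ℕ) :=
      fun x _ => rfl
    rw [List.map_congr_left this, list_map_pair, Multiset.coe_toList, hw]
  rw [hE, hO, hsplit]

lemma count_eq_sums (s : Multiset ℕ) (j : ℕ) (hj : 1 ≤ j) :
    (s.count j : ℤ) = ((s.map (· - (j-1))).sum : ℕ) - 2 * ((s.map (· - j)).sum : ℕ)
      + ((s.map (· - (j+1))).sum : ℕ) := by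
  induction s using Multiset.induction with
  | empty => simp
  | cons a s ih =>
    simp only [Multiset.count_cons, Multiset.map_cons, Multiset.sum_cons]
    by_cases hja : j = a
    · subst hja
      rw [if_pos rfl]
      push_cast
      push_cast at ih
      omega
    · rw [if_neg hja]
      push_cast
      push_cast at ih
      omega

end MS

section Sympl

variable {k : Type} [Field k] (L : List (ℕ × Bool))

def JT : Matrix (TT L ⊕ TT L) (TT L ⊕ TT L) k := fun u v =>
  Sum.elim
    (fun a => Sum.elim (fun _ => (0:k)) (fun b => if a = b then 1 else 0) v)
    (fun a => Sum.elim (fun b => if a = b then -1 else 0) (fun _ => (0:k)) v) u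

def XT : Matrix (TT L ⊕ TT L) (TT L ⊕ TT L) k := shiftMat (sig L) (coef L)

lemma sig_eq_inr_iff (p q : Fin L.length) (u : Fin (L.get p).1) (v : Fin (L.get q).1) :
    sig L (Sum.inl ⟨p, u⟩) = some (Sum.inr ⟨q, v⟩) ↔
      p = q ∧ (u : ℕ) = (v : ℕ) ∧ (u : ℕ) + 1 = (L.get p).1 ∧ (L.get p).2 = true := by
  have hu := u.isLt
  simp only [sig]
  split_ifs with h1 h2
  · constructor
    · intro h; exact absurd h (by simp)
    · rintro ⟨rfl, hv, hm, _⟩; omega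
  · simp only [Option.some.injEq, Sum.inr.injEq, TT_mk_eq]
    constructor
    · rintro ⟨rfl, hv⟩; exact ⟨rfl, hv, by omega, h2⟩
    · rintro ⟨rfl, hv, _, _⟩; exact ⟨rfl, hv⟩
  · constructor
    · intro h; exact absurd h (by simp)
    · rintro ⟨rfl, hv, hm, hb⟩; exact absurd hb h2

lemma sig_inl_eq_inl_iff (p q : Fin L.length) (u : Fin (L.get p).1) (v : Fin (L.get q).1) :
    sig L (Sum.inl ⟨p, u⟩) = some (Sum.inl ⟨q, v⟩) ↔
      p = q ∧ (v : ℕ) = (u : ℕ) + 1 := by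
  have hv := v.isLt
  simp only [sig]
  split_ifs with h1 h2
  · simp only [Option.some.injEq, Sum.inl.injEq, TT_mk_eq]
    constructor
    · rintro ⟨rfl, hw⟩; exact ⟨rfl, by omega⟩
    · rintro ⟨rfl, hw⟩; exact ⟨rfl, by omega⟩
  · constructor
    · intro h; exact absurd h (by simp)
    · rintro ⟨rfl, hw⟩; omega
  · constructor
    · intro h; exact absurd h (by simp)
    · rintro ⟨rfl, hw⟩; omega

lemma sig_inr_eq_inr_iff (p q : Fin L.length) (u : Fin (L.get p).1) (v : Fin (L.get q).1) :
    sig L (Sum.inr ⟨p, u⟩) = some (Sum.inr ⟨q, v⟩) ↔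
      p = q ∧ (u : ℕ) = (v : ℕ) + 1 := by
  have hv := v.isLt
  simp only [sig]
  split_ifs with h1
  · simp only [Option.some.injEq, Sum.inr.injEq, TT_mk_eq]
    constructor
    · rintro ⟨rfl, hw⟩; exact ⟨rfl, by omega⟩
    · rintro ⟨rfl, hw⟩; exact ⟨rfl, by omega⟩
  · constructor
    · intro h; exact absurd h (by simp)
    · rintro ⟨rfl, hw⟩; omega

lemma sig_inr_ne_inl (x y : TT L) : sig L (Sum.inr x) ≠ some (Sum.inl y) := by
  rcases x with ⟨i, a⟩
  simp only [sig]
  split_ifs <;> simp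

lemma XT_B (x y : TT L) : XT L (k := k) (Sum.inl x) (Sum.inr y) = 0 := by
  show (if sig L (Sum.inr y) = some (Sum.inl x) then coef L (Sum.inr y) else 0) = 0
  rw [if_neg (sig_inr_ne_inl L y x)]

lemma XT_C (x y : TT L) :
    XT L (k := k) (Sum.inr x) (Sum.inl y) = XT L (Sum.inr y) (Sum.inl x) := by
  rcases x with ⟨i, a⟩; rcases y with ⟨i', a'⟩
  show (if sig L (Sum.inl ⟨i', a'⟩) = some (Sum.inr ⟨i, a⟩) then (1:k) else 0)
      = (if sig L (Sum.inl ⟨i, a⟩) = some (Sum.inr ⟨i', a'⟩) then (1:k) else 0)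
  simp only [sig_eq_inr_iff]
  refine if_congr ?_ rfl rfl
  constructor <;> rintro ⟨rfl, h1, h2, h3⟩ <;> exact ⟨rfl, by omega, by omega, h3⟩

lemma XT_D (x y : TT L) :
    XT L (k := k) (Sum.inr x) (Sum.inr y) = -(XT L (Sum.inl y) (Sum.inl x)) := by
  rcases x with ⟨i, a⟩; rcases y with ⟨i', a'⟩
  show (if sig L (Sum.inr ⟨i', a'⟩) = some (Sum.inr ⟨i, a⟩) then (-1:k) else 0)
      = -(if sig L (Sum.inl ⟨i, a⟩) = some (Sum.inl ⟨i', a'⟩) then (1:k) else 0)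
  rw [apply_ite (fun z : k => -z), neg_zero]
  simp only [sig_inr_eq_inr_iff, sig_inl_eq_inl_iff]
  refine if_congr ?_ (by ring) rfl
  constructor <;> rintro ⟨rfl, h1⟩ <;> exact ⟨rfl, by omega⟩

lemma JT_mul (M : Matrix (TT L ⊕ TT L) (TT L ⊕ TT L) k) (u v : TT L ⊕ TT L) :
    (JT (k := k) L * M) u v = Sum.elim (fun a => M (Sum.inr a) v) (fun a => -(M (Sum.inl a) v)) u := by
  rcases u with a | a <;>
    simp [Matrix.mul_apply, JT, Fintype.sum_sum_type, ite_mul, Finset.sum_ite_eq]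

lemma mul_JT (M : Matrix (TT L ⊕ TT L) (TT L ⊕ TT L) k) (u v : TT L ⊕ TT L) :
    (M * JT (k := k) L) u v = Sum.elim (fun b => -(M u (Sum.inr b))) (fun b => M u (Sum.inl b)) v := by
  rcases v with b | b <;>
    simp [Matrix.mul_apply, JT, Fintype.sum_sum_type, mul_ite, Finset.sum_ite_eq']

lemma XT_sympl : (XT L (k := k))ᵀ * JT L + JT L * XT L = 0 := by
  ext u v
  rw [Matrix.add_apply, mul_JT, JT_mul, Matrix.zero_apply]
  rcases u with a | a <;> rcases v with b | b <;>
    simp only [Sum.elim_inl, Sum.elim_inr, Matrix.transpose_apply]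
  · rw [XT_C L a b]; ring
  · rw [XT_D L a b]; ring
  · rw [XT_D L b a]; ring
  · rw [XT_B L b a, XT_B L a b]; ring

end Sympl

section Final

variable {k : Type} [Field k]

lemma submatrix_pow {m l : Type} [Fintype m] [Fintype l] [DecidableEq m] [DecidableEq l]
    (M : Matrix m m k) (e : l ≃ m) (j : ℕ) :
    (M.submatrix e e) ^ j = (M ^ j).submatrix e e := by
  induction j with
  | zero => rw [pow_zero, pow_zero, Matrix.submatrix_one_equiv]
  | succ j ih => rw [pow_succ, pow_succ, ih, Matrix.submatrix_mul_equiv]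

end Final

end Stmt3Aux

open Stmt3Aux

/-- If `μ` is a partition of `2n` in which every odd part occurs with even multiplicity,
then there is a nilpotent `X ∈ sp_{2n}(k)` of Jordan type `μ` (char k = 0). -/
theorem stmt3 (k : Type) [Field k] [CharZero k] (n : ℕ) (hn : 1 ≤ n)
    (μ : Nat.Partition (2 * n)) (hodd : ∀ j : ℕ, Odd j → Even (μ.parts.count j)) :
    ∃ X : Matrix (Fin (2 * n)) (Fin (2 * n)) k,
      Xᵀ * sympJ k n + sympJ k n * X = 0 ∧ IsNilpotent X ∧ HasJordanType k X μ := by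
  classical
  obtain ⟨L, hL⟩ := exists_L μ.parts
    (fun j hj => hodd j (Nat.not_even_iff_odd.mp hj))
  have hpsum : μ.parts.sum = 2 * n := μ.parts_sum
  have h2 : 2 * (L.map Prod.fst).sum = 2 * n := by
    rw [← sum_pieces_card, hL, hpsum]
  have hcardT : Fintype.card (TT L) = n := by
    rw [Fintype.card_sigma]
    simp only [Fintype.card_fin]
    rw [sum_fin_get L Prod.fst]
    omega
  let eT : Fin n ≃ TT L := (Fintype.equivFinOfCardEq hcardT).symm
  let E : Fin (2 * n) ≃ (TT L ⊕ TT L) :=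
    ((finCongr (two_mul n)).trans finSumFinEquiv.symm).trans (Equiv.sumCongr eT eT)
  have hEl : ∀ t : TT L, ((E.symm (Sum.inl t)) : ℕ) = ((eT.symm t) : ℕ) := by
    intro t
    simp [E, Equiv.sumCongr_symm, Equiv.sumCongr_apply]
  have hEr : ∀ t : TT L, ((E.symm (Sum.inr t)) : ℕ) = n + ((eT.symm t) : ℕ) := by
    intro t
    simp [E, Equiv.sumCongr_symm, Equiv.sumCongr_apply]
    omega
  have hJ : sympJ k n = (JT (k := k) L).submatrix E E := by
    ext i j
    obtain ⟨u, rfl⟩ := E.symm.surjective i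
    obtain ⟨v, rfl⟩ := E.symm.surjective j
    rw [Matrix.submatrix_apply, Equiv.apply_symm_apply, Equiv.apply_symm_apply]
    rcases u with a | a <;> rcases v with b | b
    · have hz : JT (k := k) L (Sum.inl a) (Sum.inl b) = 0 := rfl
      rw [hz]
      simp only [sympJ]
      have h1 := (eT.symm a).isLt
      have h3 := (eT.symm b).isLt
      rw [hEl a, hEl b, if_neg (by omega), if_neg (by omega)]
    · have hz : JT (k := k) L (Sum.inl a) (Sum.inr b) = if a = b then 1 else 0 := rfl
      rw [hz]
      simp only [sympJ]
      rw [hEl a, hEr b]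
      by_cases hab : a = b
      · subst hab
        rw [if_pos rfl, if_pos (by omega)]
      · have hne : (eT.symm a : ℕ) ≠ (eT.symm b : ℕ) :=
          fun h => hab (eT.symm.injective (Fin.ext h))
        have h1 := (eT.symm a).isLt
        rw [if_neg hab, if_neg (by omega), if_neg (by omega)]
    · have hz : JT (k := k) L (Sum.inr a) (Sum.inl b) = if a = b then -1 else 0 := rfl
      rw [hz]
      simp only [sympJ]
      rw [hEr a, hEl b]
      by_cases hab : a = b
      · subst hab
        have h1 := (eT.symm a).isLt
        rw [if_pos rfl, if_neg (by omega), if_pos (by omega)]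
      · have hne : (eT.symm a : ℕ) ≠ (eT.symm b : ℕ) :=
          fun h => hab (eT.symm.injective (Fin.ext h))
        have h1 := (eT.symm a).isLt
        have h3 := (eT.symm b).isLt
        rw [if_neg hab, if_neg (by omega), if_neg (by omega)]
    · have hz : JT (k := k) L (Sum.inr a) (Sum.inr b) = 0 := rfl
      rw [hz]
      simp only [sympJ]
      have h1 := (eT.symm a).isLt
      have h3 := (eT.symm b).isLt
      rw [hEr a, hEr b, if_neg (by omega), if_neg (by omega)]
  have hXTdef : XT (k := k) L = shiftMat (sig L) (coef L) := rfl
  have hrank : ∀ j : ℕ, ((XT (k := k) L) ^ j).rank = ((μ.parts).map (· - j)).sum := by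
    intro j
    rw [hXTdef]
    obtain ⟨d, hd, hXj⟩ := pow_shiftMat (sig L) (coef (k := k) L) (coef_ne_zero L) j
    rw [rank_of_shift (iterO (sig L) j) d hd (iterO_inj (sig L) (sig_inj L) j) _ hXj]
    have hfil : (Finset.univ.filter fun b => (iterO (sig L) j b).isSome)
        = (Finset.univ.filter fun b : TT L ⊕ TT L => j ≤ lifeF L b) := by
      refine Finset.filter_congr fun b _ => ?_
      rw [iterO_isSome (sig L) (lifeF L) (sig_none L) (sig_some L) j b]
    rw [hfil, card_life L j, ← hL, sum_map_pieces]
  refine ⟨(XT (k := k) L).submatrix E E, ?_, ?_, ?_⟩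
  · rw [hJ, Matrix.transpose_submatrix, Matrix.submatrix_mul_equiv,
      Matrix.submatrix_mul_equiv]
    have hadd : ∀ P Q : Matrix (TT L ⊕ TT L) (TT L ⊕ TT L) k,
        P.submatrix ⇑E ⇑E + Q.submatrix ⇑E ⇑E = (P + Q).submatrix ⇑E ⇑E := by
      intro P Q
      ext u v
      simp [Matrix.submatrix_apply, Matrix.add_apply]
    rw [hadd, XT_sympl]
    ext u v
    simp
  · refine ⟨(Finset.univ.sup (lifeF L)) + 1, ?_⟩
    rw [submatrix_pow]
    have hXT0 : (XT (k := k) L) ^ ((Finset.univ.sup (lifeF L)) + 1) = 0 := by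
      obtain ⟨d, hd, hXj⟩ := pow_shiftMat (sig L) (coef (k := k) L) (coef_ne_zero L)
        ((Finset.univ.sup (lifeF L)) + 1)
      ext a b
      rw [hXTdef, hXj a b]
      have hb : ¬ ((Finset.univ.sup (lifeF L)) + 1 ≤ lifeF L b) := by
        have := Finset.le_sup (f := lifeF L) (Finset.mem_univ b)
        omega
      rcases hh : iterO (sig L) ((Finset.univ.sup (lifeF L)) + 1) b with _ | x
      · simp
      · exfalso
        apply hb
        rw [← iterO_isSome (sig L) (lifeF L) (sig_none L) (sig_some L), hh]
        rfl
    rw [hXT0]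
    simp
  · intro j hj
    have hr : ∀ t : ℕ, (((XT (k := k) L).submatrix E E) ^ t).rank
        = ((μ.parts).map (· - t)).sum := by
      intro t
      rw [submatrix_pow, Matrix.rank_submatrix, hrank t]
    rw [hr (j - 1), hr j, hr (j + 1)]
    exact count_eq_sums μ.parts j hj
end

section
/- Let k be a field of characteristic zero, n ≥ 2, let λ and λ' be partitions of n, and let d, d' ∈ k^×. Set m = gcd(λ). Then J_λ D(d) and J_{λ'} D(d') are conjugate under SL_n(k) if and only if λ = λ' and d·d'^{-1} ∈ (k^×)^m, the subgroup of m-th powers in k^×. -/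
open Matrix

/-- Given the list of block sizes `L` and a (0-based) index `i`, return the pair
`(s, pos)` where `s` is the size of the block containing index `i` and `pos` is the
position of `i` within that block. -/
def blockFind : List ℕ → ℕ → ℕ × ℕ
  | [], i => (0, i)
  | s :: L, i => if i < s then (s, i) else blockFind L (i - s)

/-- The list of parts of a partition, in weakly decreasing order. -/
def partsList {n : ℕ} (μ : Nat.Partition n) : List ℕ :=
  (μ.parts.sort (· ≤ ·)).reverse

/-- The nilpotent Jordan matrix `J_μ` associated to a partition `μ` of `n`. -/
def jordanMat (k : Type) [Field k] {n : ℕ} (μ : Nat.Partition n) :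
    Matrix (Fin n) (Fin n) k :=
  fun i j =>
    if (j : ℕ) = (i : ℕ) + 1 ∧
        (blockFind (partsList μ) (i : ℕ)).2 + 1 < (blockFind (partsList μ) (i : ℕ)).1
    then 1 else 0

/-- The diagonal matrix `D(d) = diag(1, …, 1, d)`. -/
def Dmat (k : Type) [Field k] (n : ℕ) (d : k) : Matrix (Fin n) (Fin n) k :=
  Matrix.diagonal fun i => if (i : ℕ) = n - 1 then d else 1

/-- Conjugacy under `SL_n(k)`: there is `g` with `det g = 1` and `g * X * g⁻¹ = Y`. -/
def SLConj (k : Type) [Field k] {n : ℕ} (X Y : Matrix (Fin n) (Fin n) k) : Prop :=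
  ∃ g : Matrix (Fin n) (Fin n) k, g.det = 1 ∧ g * X * g⁻¹ = Y

/-! ### Auxiliary lemmas -/



lemma blockFind_cons_lt {s : ℕ} (L : List ℕ) {i : ℕ} (h : i < s) :
    blockFind (s :: L) i = (s, i) := by unfold blockFind; rw [if_pos h]

lemma blockFind_cons_ge {s : ℕ} (L : List ℕ) {i : ℕ} (h : ¬ i < s) :
    blockFind (s :: L) i = blockFind L (i - s) := by
  conv_lhs => unfold blockFind
  rw [if_neg h]

lemma bf_pos_le : ∀ (L : List ℕ) (i : ℕ), (blockFind L i).2 ≤ i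
  | [], i => le_refl i
  | s :: L, i => by
    by_cases h : i < s
    · rw [blockFind_cons_lt L h]
    · rw [blockFind_cons_ge L h]
      exact (bf_pos_le L (i - s)).trans (Nat.sub_le i s)

lemma bf_lt (L : List ℕ) (i : ℕ) (hi : i < L.sum) :
    (blockFind L i).2 < (blockFind L i).1 ∧ (blockFind L i).1 ∈ L := by
  induction L generalizing i with
  | nil => simp at hi
  | cons s L ih =>
    by_cases h : i < s
    · rw [blockFind_cons_lt L h]
      exact ⟨h, List.mem_cons_self⟩
    · rw [blockFind_cons_ge L h]
      have : i - s < L.sum := by simp only [List.sum_cons] at hi; omega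
      obtain ⟨h1, h2⟩ := ih (i - s) this
      exact ⟨h1, List.mem_cons_of_mem s h2⟩

lemma bf_succ (L : List ℕ) (i : ℕ) (h : (blockFind L i).2 + 1 < (blockFind L i).1) :
    blockFind L (i + 1) = ((blockFind L i).1, (blockFind L i).2 + 1) ∧ i + 1 < L.sum := by
  induction L generalizing i with
  | nil => simp [blockFind] at h
  | cons s L ih =>
    by_cases hlt : i < s
    · rw [blockFind_cons_lt L hlt] at h ⊢
      rw [blockFind_cons_lt L (show i + 1 < s by omega)]
      exact ⟨rfl, by simp only [List.sum_cons]; omega⟩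
    · rw [blockFind_cons_ge L hlt] at h ⊢
      rw [blockFind_cons_ge L (show ¬ i + 1 < s by omega)]
      have e : i + 1 - s = (i - s) + 1 := by omega
      rw [e]
      obtain ⟨h1, h2⟩ := ih (i - s) h
      exact ⟨h1, by simp only [List.sum_cons]; omega⟩

lemma bf_pred (L : List ℕ) (i : ℕ) (h : 0 < (blockFind L i).2) :
    blockFind L (i - 1) = ((blockFind L i).1, (blockFind L i).2 - 1) := by
  induction L generalizing i with
  | nil => simp [blockFind]
  | cons s L ih =>
    by_cases hlt : i < s
    · rw [blockFind_cons_lt L hlt] at h ⊢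
      rw [blockFind_cons_lt L (show i - 1 < s by omega)]
    · rw [blockFind_cons_ge L hlt] at h ⊢
      have hip : 0 < i - s := lt_of_lt_of_le h (bf_pos_le L (i - s))
      rw [blockFind_cons_ge L (show ¬ i - 1 < s by omega)]
      have e : i - 1 - s = (i - s) - 1 := by omega
      rw [e]
      exact ih (i - s) h

lemma bf_exists (L : List ℕ) (s p : ℕ) (hs : s ∈ L) (hp : p < s) :
    ∃ i < L.sum, blockFind L i = (s, p) := by
  induction L with
  | nil => simp at hs
  | cons a L ih =>
    rcases List.mem_cons.mp hs with h | h
    · subst h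
      exact ⟨p, by simp only [List.sum_cons]; omega, blockFind_cons_lt L hp⟩
    · obtain ⟨i, hi, hbf⟩ := ih h
      refine ⟨a + i, by simp only [List.sum_cons]; omega, ?_⟩
      rw [blockFind_cons_ge L (by omega)]
      simpa using hbf

lemma bf_add (L : List ℕ) (i r : ℕ) (h : (blockFind L i).2 + r < (blockFind L i).1)
    (hi : i < L.sum) :
    blockFind L (i + r) = ((blockFind L i).1, (blockFind L i).2 + r) ∧ i + r < L.sum := by
  induction r with
  | zero => exact ⟨by simp, by simpa using hi⟩
  | succ r ih =>
    obtain ⟨h1, h2⟩ := ih (by omega)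
    have h' : (blockFind L (i+r)).2 + 1 < (blockFind L (i+r)).1 := by
      rw [h1]; simpa using by omega
    obtain ⟨h3, h4⟩ := bf_succ L (i + r) h'
    refine ⟨?_, by omega⟩
    rw [← Nat.add_assoc, h3, h1]
    simp [Nat.add_assoc]

lemma bf_count (L : List ℕ) (f : ℕ × ℕ → Prop) [DecidablePred f] :
    ((Finset.range L.sum).filter (fun i => f (blockFind L i))).card
      = (L.map (fun s => ((Finset.range s).filter (fun p => f (s, p))).card)).sum := by
  induction L with
  | nil => simp
  | cons s L ih =>
    simp only [List.sum_cons, List.map_cons]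
    rw [Finset.range_add, Finset.filter_union, Finset.card_union_of_disjoint]
    · congr 1
      · have e : ∀ i ∈ Finset.range s, f (blockFind (s :: L) i) ↔ f (s, i) := by
          intro i hi
          simp only [Finset.mem_range] at hi
          rw [blockFind_cons_lt L hi]
        rw [Finset.filter_congr e]
      · rw [Finset.filter_map, Finset.card_map, ← ih]
        congr 1
        apply Finset.filter_congr
        intro i _
        simp only [Function.comp, addLeftEmbedding_apply]
        rw [blockFind_cons_ge L (by omega), Nat.add_sub_cancel_left]
    · exact (Finset.disjoint_filter_filter (Finset.disjoint_left.mpr (by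
        intro a ha hb
        simp only [Finset.mem_range, Finset.mem_map, addLeftEmbedding_apply] at ha hb
        omega)))


lemma partsList_coe {n : ℕ} (μ : Nat.Partition n) : (↑(partsList μ) : Multiset ℕ) = μ.parts := by
  unfold partsList
  rw [Multiset.coe_reverse]
  exact Multiset.sort_eq μ.parts (· ≤ ·)

lemma partsList_sum {n : ℕ} (μ : Nat.Partition n) : (partsList μ).sum = n := by
  have := congrArg Multiset.sum (partsList_coe μ)
  rw [Multiset.sum_coe] at this
  rw [this, μ.parts_sum]

lemma partsList_pos {n : ℕ} (μ : Nat.Partition n) {s : ℕ} (hs : s ∈ partsList μ) : 0 < s :=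
  μ.parts_pos (by rw [← partsList_coe μ] at *; exact hs)

lemma partsList_gcd {n : ℕ} (μ : Nat.Partition n) :
    (partsList μ).foldr Nat.gcd 0 = μ.parts.gcd := by
  rw [← partsList_coe μ]
  show _ = Multiset.fold GCDMonoid.gcd 0 _
  rw [Multiset.coe_fold_r]
  induction (partsList μ) with
  | nil => rfl
  | cons a l ih => simp only [List.foldr_cons, ih]; rfl

/-- Bezout for the block structure: a weight function on block starts summing to the gcd. -/
lemma bf_bezout (L : List ℕ) (hpos : ∀ s ∈ L, 0 < s) :
    ∃ W : ℕ → ℤ, ∑ i ∈ Finset.range L.sum, W (i - (blockFind L i).2)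
      = ((L.foldr Nat.gcd 0 : ℕ) : ℤ) := by
  induction L with
  | nil => exact ⟨fun _ => 0, by simp⟩
  | cons s L ih =>
    obtain ⟨W', hW'⟩ := ih (fun t ht => hpos t (List.mem_cons_of_mem s ht))
    have hs : 0 < s := hpos s (List.mem_cons_self)
    obtain ⟨a, b, hab⟩ : ∃ a b : ℤ, s * a + ((L.foldr Nat.gcd 0 : ℕ) : ℤ) * b
        = (Nat.gcd s (L.foldr Nat.gcd 0) : ℤ) := by
      refine ⟨Nat.gcdA s (L.foldr Nat.gcd 0), Nat.gcdB s (L.foldr Nat.gcd 0), ?_⟩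
      exact (Nat.gcd_eq_gcd_ab s (L.foldr Nat.gcd 0)).symm
    refine ⟨fun x => if x < s then a else b * W' (x - s), ?_⟩
    simp only [List.sum_cons, List.foldr_cons]
    rw [Finset.range_add, Finset.sum_union]
    · have e1 : ∑ i ∈ Finset.range s,
          (fun x => if x < s then a else b * W' (x - s)) (i - (blockFind (s :: L) i).2) = s * a := by
        rw [Finset.sum_congr rfl (g := fun _ => a)]
        · rw [Finset.sum_const, Finset.card_range]; push_cast; ring
        · intro i hi
          simp only [Finset.mem_range] at hi
          rw [blockFind_cons_lt L hi]
          simp [hs]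
      have e2 : ∑ i ∈ (Finset.range L.sum).map (addLeftEmbedding s),
          (fun x => if x < s then a else b * W' (x - s)) (i - (blockFind (s :: L) i).2)
          = ((L.foldr Nat.gcd 0 : ℕ) : ℤ) * b := by
        rw [Finset.sum_map]
        have e3 : ∀ i ∈ Finset.range L.sum,
            (fun x => if x < s then a else b * W' (x - s))
              ((addLeftEmbedding s i) - (blockFind (s :: L) (addLeftEmbedding s i)).2)
            = b * W' (i - (blockFind L i).2) := by
          intro i _
          simp only [addLeftEmbedding_apply]
          rw [blockFind_cons_ge L (by omega), Nat.add_sub_cancel_left]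
          have hle := bf_pos_le L i
          rw [if_neg (by omega)]
          have e4 : s + i - (blockFind L i).2 - s = i - (blockFind L i).2 := by omega
          rw [e4]
        rw [Finset.sum_congr rfl e3, ← Finset.mul_sum, hW']
        ring
      rw [e1, e2, hab]
    · exact Finset.disjoint_left.mpr (by
        intro x hx hy
        simp only [Finset.mem_range, Finset.mem_map, addLeftEmbedding_apply] at hx hy
        omega)



section Basics
variable (k : Type) [Field k] {n : ℕ} (μ : Nat.Partition n) (d : k)

lemma jordan_lastRow_eq_zero (i : Fin n) (h : (i : ℕ) = n - 1) (j : Fin n) :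
    jordanMat k μ i j = 0 := by
  unfold jordanMat
  rw [if_neg]
  rintro ⟨h1, -⟩
  have := j.isLt
  have := i.isLt
  omega

lemma Dmat_det : (Dmat k n d).det = d ^ (if n = 0 then 0 else 1) := by
  unfold Dmat
  rw [det_diagonal]
  rcases Nat.eq_zero_or_pos n with h | h
  · subst h; simp
  · rw [if_neg (by omega), pow_one]
    rw [Finset.prod_eq_single (⟨n - 1, by omega⟩ : Fin n)]
    · simp
    · intro b _ hb
      rw [if_neg (by simpa [Fin.ext_iff] using hb)]
    · simp

lemma Dmat_mul_jordan : Dmat k n d * jordanMat k μ = jordanMat k μ := by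
  ext i j
  rw [Dmat, diagonal_mul]
  rcases eq_or_ne (i : ℕ) (n - 1) with h | h
  · rw [jordan_lastRow_eq_zero k μ i h j, mul_zero]
  · rw [if_neg h, one_mul]

lemma Dmat_isUnit (hd : d ≠ 0) : IsUnit (Dmat k n d).det := by
  rw [Dmat_det]
  exact (isUnit_iff_ne_zero.mpr (pow_ne_zero _ hd))

lemma Dmat_inv_mul (hd : d ≠ 0) : (Dmat k n d)⁻¹ * Dmat k n d = 1 :=
  nonsing_inv_mul _ (Dmat_isUnit k d hd)

lemma Dmat_mul_inv (hd : d ≠ 0) : Dmat k n d * (Dmat k n d)⁻¹ = 1 :=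
  mul_nonsing_inv _ (Dmat_isUnit k d hd)

/-- `J * D = D⁻¹ * J * D`. -/
lemma jordan_Dmat_conj (hd : d ≠ 0) :
    jordanMat k μ * Dmat k n d = (Dmat k n d)⁻¹ * jordanMat k μ * Dmat k n d := by
  have h1 : (Dmat k n d)⁻¹ * jordanMat k μ = jordanMat k μ :=
    calc (Dmat k n d)⁻¹ * jordanMat k μ
        = (Dmat k n d)⁻¹ * (Dmat k n d * jordanMat k μ) := by rw [Dmat_mul_jordan]
      _ = jordanMat k μ := by rw [← mul_assoc, Dmat_inv_mul k d hd, one_mul]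
  rw [h1]

end Basics

section Rank
variable (k : Type) [Field k] {n : ℕ} (μ : Nat.Partition n)

lemma fin_lt_sum (i : Fin n) : (i : ℕ) < (partsList μ).sum := by
  rw [partsList_sum]; exact i.isLt

lemma jordan_entry (i j : Fin n) :
    jordanMat k μ i j = if ((j : ℕ) = (i : ℕ) + 1 ∧
      (blockFind (partsList μ) (i : ℕ)).2 + 1 < (blockFind (partsList μ) (i : ℕ)).1)
      then 1 else 0 := rfl

lemma jpow_entry (r : ℕ) (i j : Fin n) :
    (jordanMat k μ ^ r) i j =
      if (j : ℕ) = (i : ℕ) + r ∧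
          (blockFind (partsList μ) (i : ℕ)).2 + r < (blockFind (partsList μ) (i : ℕ)).1
      then 1 else 0 := by
  induction r generalizing j with
  | zero =>
    have hC : (blockFind (partsList μ) (i : ℕ)).2 < (blockFind (partsList μ) (i : ℕ)).1 :=
      (bf_lt _ _ (fin_lt_sum μ i)).1
    rcases eq_or_ne j i with h | h
    · subst h
      rw [pow_zero, one_apply_eq, if_pos ⟨by omega, by omega⟩]
    · rw [pow_zero, one_apply_ne (Ne.symm h), if_neg]
      rintro ⟨h1, -⟩
      exact h (Fin.ext (by omega))
  | succ r ih =>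
    rw [pow_succ, mul_apply]
    by_cases hr : (blockFind (partsList μ) (i : ℕ)).2 + r < (blockFind (partsList μ) (i : ℕ)).1
    · obtain ⟨hbf, hlt⟩ := bf_add _ _ r hr (fin_lt_sum μ i)
      rw [partsList_sum] at hlt
      have hS : (blockFind (partsList μ) ((i : ℕ) + r)).1
          = (blockFind (partsList μ) (i : ℕ)).1 := by rw [hbf]
      have hP : (blockFind (partsList μ) ((i : ℕ) + r)).2
          = (blockFind (partsList μ) (i : ℕ)).2 + r := by rw [hbf]
      rw [Finset.sum_eq_single (⟨(i : ℕ) + r, hlt⟩ : Fin n)]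
      · rw [ih, if_pos ⟨rfl, hr⟩, one_mul, jordan_entry]
        simp only [hS, hP]
        by_cases hj : (j : ℕ) = (i : ℕ) + (r + 1)
        · by_cases hc : (blockFind (partsList μ) (i : ℕ)).2 + (r + 1)
              < (blockFind (partsList μ) (i : ℕ)).1
          · rw [if_pos ⟨by omega, by omega⟩, if_pos ⟨hj, hc⟩]
          · rw [if_neg (by rintro ⟨-, h2⟩; omega), if_neg (by rintro ⟨-, h2⟩; omega)]
        · rw [if_neg (by rintro ⟨h1, -⟩; omega), if_neg (by rintro ⟨h1, -⟩; omega)]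
      · intro b _ hb
        rw [ih, if_neg, zero_mul]
        rintro ⟨h1, -⟩
        exact hb (Fin.ext (by simpa using h1))
      · intro h; exact absurd (Finset.mem_univ _) h
    · rw [if_neg (by rintro ⟨-, h2⟩; omega)]
      apply Finset.sum_eq_zero
      intro l _
      rw [ih, if_neg (by rintro ⟨-, h2⟩; omega), zero_mul]

lemma jpow_mul_transpose (r : ℕ) :
    jordanMat k μ ^ r * (jordanMat k μ ^ r)ᵀ =
      diagonal (fun i : Fin n =>
        if (blockFind (partsList μ) (i : ℕ)).2 + r < (blockFind (partsList μ) (i : ℕ)).1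
        then (1 : k) else 0) := by
  ext i i'
  rw [mul_apply]
  have key : ∀ l : Fin n, (jordanMat k μ ^ r) i l * (jordanMat k μ ^ r)ᵀ l i'
      = (if ((l : ℕ) = (i : ℕ) + r ∧ (blockFind (partsList μ) (i : ℕ)).2 + r
            < (blockFind (partsList μ) (i : ℕ)).1) then (1:k) else 0)
        * (if ((l : ℕ) = (i' : ℕ) + r ∧ (blockFind (partsList μ) (i' : ℕ)).2 + r
            < (blockFind (partsList μ) (i' : ℕ)).1) then (1:k) else 0) := by
    intro l
    rw [transpose_apply, jpow_entry, jpow_entry]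
  simp only [key]
  rcases eq_or_ne i i' with h | h
  · subst h
    rw [diagonal_apply_eq]
    by_cases hr : (blockFind (partsList μ) (i : ℕ)).2 + r < (blockFind (partsList μ) (i : ℕ)).1
    · obtain ⟨hbf, hlt⟩ := bf_add _ _ r hr (fin_lt_sum μ i)
      rw [partsList_sum] at hlt
      rw [Finset.sum_eq_single (⟨(i : ℕ) + r, hlt⟩ : Fin n)]
      · rw [if_pos ⟨rfl, hr⟩, one_mul, if_pos hr]
      · intro b _ hb
        rw [if_neg, zero_mul]
        rintro ⟨h1, -⟩
        exact hb (Fin.ext (by simpa using h1))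
      · intro h; exact absurd (Finset.mem_univ _) h
    · rw [if_neg hr]
      apply Finset.sum_eq_zero
      intro l _
      rw [if_neg (by rintro ⟨-, h2⟩; omega), zero_mul]
  · rw [diagonal_apply_ne _ h]
    apply Finset.sum_eq_zero
    intro l _
    by_cases h1 : (l : ℕ) = (i : ℕ) + r ∧
        (blockFind (partsList μ) (i : ℕ)).2 + r < (blockFind (partsList μ) (i : ℕ)).1
    · obtain ⟨h3, -⟩ := id h1
      rw [if_pos h1, one_mul, if_neg]
      rintro ⟨h2, -⟩
      exact h (Fin.ext (by omega))
    · rw [if_neg h1, zero_mul]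

lemma diag_mul_jpow (r : ℕ) :
    diagonal (fun i : Fin n =>
        if (blockFind (partsList μ) (i : ℕ)).2 + r < (blockFind (partsList μ) (i : ℕ)).1
        then (1 : k) else 0) * jordanMat k μ ^ r = jordanMat k μ ^ r := by
  ext i j
  rw [diagonal_mul]
  by_cases hr : (blockFind (partsList μ) (i : ℕ)).2 + r < (blockFind (partsList μ) (i : ℕ)).1
  · rw [if_pos hr, one_mul]
  · rw [if_neg hr, zero_mul, jpow_entry, if_neg (by tauto)]

lemma rank_jpow (r : ℕ) :
    (jordanMat k μ ^ r).rank = ((partsList μ).map (fun s => s - r)).sum := by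
  classical
  have h1 : (jordanMat k μ ^ r).rank = (diagonal (fun i : Fin n =>
      if (blockFind (partsList μ) (i : ℕ)).2 + r < (blockFind (partsList μ) (i : ℕ)).1
      then (1 : k) else 0)).rank := by
    apply le_antisymm
    · conv_lhs => rw [← diag_mul_jpow k μ r]
      exact rank_mul_le_left _ _
    · rw [← jpow_mul_transpose k μ r]
      exact rank_mul_le_left _ _
  rw [h1, rank_diagonal]
  have h2 : Fintype.card {i : Fin n // (if (blockFind (partsList μ) (i : ℕ)).2 + r
        < (blockFind (partsList μ) (i : ℕ)).1 then (1 : k) else 0) ≠ 0}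
      = ((Finset.range (partsList μ).sum).filter
          (fun i => (blockFind (partsList μ) i).2 + r < (blockFind (partsList μ) i).1)).card := by
    rw [Fintype.card_subtype]
    apply Finset.card_bij (fun (i : Fin n) _ => (i : ℕ))
    · intro a ha
      simp only [Finset.mem_filter, Finset.mem_univ, true_and] at ha
      simp only [Finset.mem_filter, Finset.mem_range]
      refine ⟨fin_lt_sum μ a, ?_⟩
      by_contra hc
      rw [if_neg hc] at ha
      exact ha rfl
    · intro a _ b _ hab
      exact Fin.ext hab
    · intro b hb
      simp only [Finset.mem_filter, Finset.mem_range] at hb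
      obtain ⟨hb1, hb2⟩ := hb
      rw [partsList_sum] at hb1
      refine ⟨⟨b, hb1⟩, ?_, rfl⟩
      simp only [Finset.mem_filter, Finset.mem_univ, true_and]
      rw [if_pos hb2]
      exact one_ne_zero
  rw [h2, bf_count (partsList μ) (fun q : ℕ × ℕ => q.2 + r < q.1)]
  congr 1
  apply List.map_congr_left
  intro s _
  have e : (Finset.range s).filter (fun p => p + r < s) = Finset.range (s - r) := by
    ext p
    simp only [Finset.mem_filter, Finset.mem_range]
    omega
  rw [e, Finset.card_range]

end Rank

/-- the count identity for truncated subtraction sums -/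
lemma multiset_trunc_sum_identity (s : Multiset ℕ) (a : ℕ) (ha : 1 ≤ a) :
    (s.map (fun x => x - (a - 1))).sum + (s.map (fun x => x - (a + 1))).sum
      = 2 * (s.map (fun x => x - a)).sum + s.count a := by
  induction s using Multiset.induction_on with
  | empty => simp
  | cons x s ih =>
    simp only [Multiset.map_cons, Multiset.sum_cons, Multiset.count_cons]
    rcases eq_or_ne a x with h | h
    · rw [if_pos h]; subst h; omega
    · rw [if_neg h]; omega

lemma partition_eq_of_trunc_sums {n : ℕ} (μ ν : Nat.Partition n)
    (h : ∀ r : ℕ, (μ.parts.map (fun x => x - r)).sum = (ν.parts.map (fun x => x - r)).sum) :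
    μ = ν := by
  ext1
  · ext a
    rcases Nat.eq_zero_or_pos a with ha | ha
    · subst ha
      rw [Multiset.count_eq_zero_of_notMem (fun hc => (μ.parts_pos hc).ne' rfl),
          Multiset.count_eq_zero_of_notMem (fun hc => (ν.parts_pos hc).ne' rfl)]
    · have h1 := multiset_trunc_sum_identity μ.parts a ha
      have h2 := multiset_trunc_sum_identity ν.parts a ha
      rw [h (a-1), h (a+1), h a] at h1
      omega

lemma nat_partition_ext {n : ℕ} (μ ν : Nat.Partition n) (h : μ.parts = ν.parts) : μ = ν := by
  cases μ; cases ν; simpa using h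

/-- rank is invariant under conjugation -/
lemma rank_conj {k : Type} [Field k] {n : ℕ} (g M : Matrix (Fin n) (Fin n) k)
    (hg : IsUnit g.det) : (g * M * g⁻¹).rank = M.rank := by
  apply le_antisymm
  · exact le_trans (rank_mul_le_left _ _) (rank_mul_le_right _ _)
  · have e : g⁻¹ * (g * M * g⁻¹) * g = M := by
      simp only [mul_assoc]
      rw [nonsing_inv_mul _ hg, mul_one, ← mul_assoc, nonsing_inv_mul _ hg, one_mul]
    conv_lhs => rw [← e]
    exact le_trans (rank_mul_le_left _ _) (rank_mul_le_right _ _)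

lemma matrix_conj_pow {k : Type} [Field k] {n : ℕ} (A M : Matrix (Fin n) (Fin n) k)
    (hA : IsUnit A.det) (r : ℕ) : (A⁻¹ * M * A) ^ r = A⁻¹ * M ^ r * A := by
  induction r with
  | zero => rw [pow_zero, pow_zero, mul_one, nonsing_inv_mul _ hA]
  | succ r ih =>
    rw [pow_succ, ih, pow_succ]
    simp only [mul_assoc]
    rw [← mul_assoc A A⁻¹ (M * A), mul_nonsing_inv _ hA, one_mul]

def Pof {n : ℕ} (μ : Nat.Partition n) (i : ℕ) : ℕ := (blockFind (partsList μ) i).2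
def Sof {n : ℕ} (μ : Nat.Partition n) (i : ℕ) : ℕ := (blockFind (partsList μ) i).1

section PS
variable {n : ℕ} (μ : Nat.Partition n)

lemma Pof_le (i : ℕ) : Pof μ i ≤ i := bf_pos_le _ i

lemma PS_lt {i : ℕ} (hi : i < n) : Pof μ i < Sof μ i :=
  (bf_lt (partsList μ) i (by rwa [partsList_sum])).1

lemma Sof_mem {i : ℕ} (hi : i < n) : Sof μ i ∈ partsList μ :=
  (bf_lt (partsList μ) i (by rwa [partsList_sum])).2

lemma Sof_le {i : ℕ} (hi : i < n) : Sof μ i ≤ n := by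
  conv_rhs => rw [← partsList_sum μ]
  exact List.single_le_sum (fun x _ => Nat.zero_le x) _ (Sof_mem μ hi)

lemma pred_PS {i : ℕ} (h : 0 < Pof μ i) :
    Pof μ (i - 1) = Pof μ i - 1 ∧ Sof μ (i - 1) = Sof μ i := by
  have e := bf_pred (partsList μ) i h
  constructor
  · show (blockFind (partsList μ) (i-1)).2 = _
    rw [e]
    rfl
  · show (blockFind (partsList μ) (i-1)).1 = _
    rw [e]
    rfl

lemma succ_PS {i : ℕ} (h : Pof μ i + 1 < Sof μ i) :
    Pof μ (i + 1) = Pof μ i + 1 ∧ Sof μ (i + 1) = Sof μ i ∧ i + 1 < n := by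
  obtain ⟨h1, h2⟩ := bf_succ (partsList μ) i h
  rw [partsList_sum] at h2
  refine ⟨?_, ?_, h2⟩
  · show (blockFind (partsList μ) (i+1)).2 = _
    rw [h1]
    rfl
  · show (blockFind (partsList μ) (i+1)).1 = _
    rw [h1]
    rfl

lemma jordan_entry' (k : Type) [Field k] (i j : Fin n) :
    jordanMat k μ i j = if ((j : ℕ) = (i : ℕ) + 1 ∧ Pof μ (i : ℕ) + 1 < Sof μ (i : ℕ))
      then 1 else 0 := rfl

end PS

section Centralizer
variable {k : Type} [Field k] {n : ℕ} {μ : Nat.Partition n}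
variable (u : Matrix (Fin n) (Fin n) k)

lemma cr_left (i j : Fin n) (h : Pof μ (i : ℕ) + 1 < Sof μ (i : ℕ)) (hi1 : (i : ℕ) + 1 < n) :
    (jordanMat k μ * u) i j = u ⟨(i : ℕ) + 1, hi1⟩ j := by
  rw [mul_apply, Finset.sum_eq_single (⟨(i : ℕ) + 1, hi1⟩ : Fin n)]
  · rw [jordan_entry', if_pos ⟨rfl, h⟩, one_mul]
  · intro b _ hb
    rw [jordan_entry', if_neg, zero_mul]
    rintro ⟨h1, -⟩
    exact hb (Fin.ext (by simpa using h1))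
  · intro hmem; exact absurd (Finset.mem_univ _) hmem

lemma cr_left0 (i j : Fin n) (h : ¬ (Pof μ (i : ℕ) + 1 < Sof μ (i : ℕ))) :
    (jordanMat k μ * u) i j = 0 := by
  rw [mul_apply]
  apply Finset.sum_eq_zero
  intro l _
  rw [jordan_entry', if_neg (by tauto), zero_mul]

lemma cr_right (i j : Fin n) (h : 0 < Pof μ (j : ℕ)) (hj1 : (j : ℕ) - 1 < n) :
    (u * jordanMat k μ) i j = u i ⟨(j : ℕ) - 1, hj1⟩ := by
  have hple := Pof_le μ (j : ℕ)
  obtain ⟨hp, hs⟩ := pred_PS μ h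
  have hlt := PS_lt μ j.isLt
  rw [mul_apply, Finset.sum_eq_single (⟨(j : ℕ) - 1, hj1⟩ : Fin n)]
  · rw [jordan_entry', if_pos, mul_one]
    constructor
    · show (j : ℕ) = (j : ℕ) - 1 + 1
      omega
    · show Pof μ ((j : ℕ) - 1) + 1 < Sof μ ((j : ℕ) - 1)
      omega
  · intro b _ hb
    rw [jordan_entry', if_neg, mul_zero]
    rintro ⟨h1, -⟩
    apply hb
    apply Fin.ext
    show (b : ℕ) = (j : ℕ) - 1
    omega
  · intro hmem; exact absurd (Finset.mem_univ _) hmem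

lemma cr_right0 (i j : Fin n) (h : ¬ (0 < Pof μ (j : ℕ))) :
    (u * jordanMat k μ) i j = 0 := by
  rw [mul_apply]
  apply Finset.sum_eq_zero
  intro l _
  rw [jordan_entry', if_neg, mul_zero]
  rintro ⟨h1, h2⟩
  obtain ⟨hp, -, -⟩ := succ_PS μ h2
  rw [← h1] at hp
  omega

lemma cent_T1 (hu : u * jordanMat k μ = jordanMat k μ * u) :
    ∀ (q : ℕ) (i j : Fin n), Pof μ (j : ℕ) = q → Pof μ (j : ℕ) < Pof μ (i : ℕ) → u i j = 0 := by
  intro q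
  induction q with
  | zero =>
    intro i j hq hlt
    have hple := Pof_le μ (i : ℕ)
    have hi1 : (i : ℕ) - 1 < n := by have := i.isLt; omega
    obtain ⟨hp, hs⟩ := pred_PS μ (i := (i : ℕ)) (by omega)
    have hSi := PS_lt μ i.isLt
    have hstep : Pof μ ((⟨(i:ℕ)-1, hi1⟩ : Fin n) : ℕ) + 1 < Sof μ ((⟨(i:ℕ)-1, hi1⟩ : Fin n) : ℕ) := by
      show Pof μ ((i:ℕ)-1) + 1 < Sof μ ((i:ℕ)-1)
      omega
    have hi2 : ((⟨(i:ℕ)-1, hi1⟩ : Fin n) : ℕ) + 1 < n := by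
      show (i:ℕ) - 1 + 1 < n
      have := i.isLt; omega
    have e1 := cr_left u ⟨(i:ℕ)-1, hi1⟩ j hstep hi2
    have e2 : (u * jordanMat k μ) ⟨(i:ℕ)-1, hi1⟩ j = 0 := cr_right0 u _ j (by omega)
    rw [← hu, e2] at e1
    have hii : i = ⟨((⟨(i:ℕ)-1, hi1⟩ : Fin n) : ℕ) + 1, hi2⟩ :=
      Fin.ext (by show (i:ℕ) = (i:ℕ) - 1 + 1; omega)
    have e3 : u i j = u ⟨((⟨(i:ℕ)-1, hi1⟩ : Fin n) : ℕ) + 1, hi2⟩ j := by rw [← hii]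
    rw [e3, ← e1]
  | succ q ih =>
    intro i j hq hlt
    have hplei := Pof_le μ (i : ℕ)
    have hplej := Pof_le μ (j : ℕ)
    have hi1 : (i : ℕ) - 1 < n := by have := i.isLt; omega
    have hj1 : (j : ℕ) - 1 < n := by have := j.isLt; omega
    obtain ⟨hpi, hsi⟩ := pred_PS μ (i := (i : ℕ)) (by omega)
    obtain ⟨hpj, hsj⟩ := pred_PS μ (i := (j : ℕ)) (by omega)
    have hSi := PS_lt μ i.isLt
    have hstep : Pof μ ((⟨(i:ℕ)-1, hi1⟩ : Fin n) : ℕ) + 1 < Sof μ ((⟨(i:ℕ)-1, hi1⟩ : Fin n) : ℕ) := by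
      show Pof μ ((i:ℕ)-1) + 1 < Sof μ ((i:ℕ)-1)
      omega
    have hi2 : ((⟨(i:ℕ)-1, hi1⟩ : Fin n) : ℕ) + 1 < n := by
      show (i:ℕ) - 1 + 1 < n
      have := i.isLt; omega
    have e1 := cr_left u ⟨(i:ℕ)-1, hi1⟩ j hstep hi2
    have e2 : (u * jordanMat k μ) ⟨(i:ℕ)-1, hi1⟩ j = u ⟨(i:ℕ)-1, hi1⟩ ⟨(j:ℕ)-1, hj1⟩ :=
      cr_right u _ j (by omega) hj1
    have e4 : u ⟨(i:ℕ)-1, hi1⟩ ⟨(j:ℕ)-1, hj1⟩ = 0 := by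
      apply ih
      · show Pof μ ((j:ℕ)-1) = q
        omega
      · show Pof μ ((j:ℕ)-1) < Pof μ ((i:ℕ)-1)
        omega
    rw [← hu, e2, e4] at e1
    have hii : i = ⟨((⟨(i:ℕ)-1, hi1⟩ : Fin n) : ℕ) + 1, hi2⟩ :=
      Fin.ext (by show (i:ℕ) = (i:ℕ) - 1 + 1; omega)
    have e3 : u i j = u ⟨((⟨(i:ℕ)-1, hi1⟩ : Fin n) : ℕ) + 1, hi2⟩ j := by rw [← hii]
    rw [e3, ← e1]

lemma cent_T2 (hu : u * jordanMat k μ = jordanMat k μ * u) :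
    ∀ (t : ℕ) (i j : Fin n), Sof μ (i : ℕ) - 1 - Pof μ (i : ℕ) ≤ t →
      Pof μ (i : ℕ) = Pof μ (j : ℕ) → Sof μ (i : ℕ) < Sof μ (j : ℕ) → u i j = 0 := by
  intro t
  induction t with
  | zero =>
    intro i j ht hp hs
    have hSi := PS_lt μ i.isLt
    have hstepj : Pof μ (j : ℕ) + 1 < Sof μ (j : ℕ) := by omega
    obtain ⟨hpj, hsj, hjn⟩ := succ_PS μ hstepj
    have e1 : (jordanMat k μ * u) i ⟨(j:ℕ)+1, hjn⟩ = 0 := cr_left0 u i _ (by omega)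
    have hj2 : ((⟨(j:ℕ)+1, hjn⟩ : Fin n) : ℕ) - 1 < n := by
      show (j:ℕ) + 1 - 1 < n
      have := j.isLt; omega
    have e2 := cr_right u i (⟨(j:ℕ)+1, hjn⟩ : Fin n) (by show 0 < Pof μ ((j:ℕ)+1); omega) hj2
    rw [hu, e1] at e2
    have hjj : j = ⟨((⟨(j:ℕ)+1, hjn⟩ : Fin n) : ℕ) - 1, hj2⟩ :=
      Fin.ext (by show (j:ℕ) = (j:ℕ) + 1 - 1; omega)
    have e5 : u i j = u i ⟨((⟨(j:ℕ)+1, hjn⟩ : Fin n) : ℕ) - 1, hj2⟩ := by rw [← hjj]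
    rw [e5, ← e2]
  | succ t ih =>
    intro i j ht hp hs
    have hSi := PS_lt μ i.isLt
    have hstepj : Pof μ (j : ℕ) + 1 < Sof μ (j : ℕ) := by omega
    obtain ⟨hpj, hsj, hjn⟩ := succ_PS μ hstepj
    have hj2 : ((⟨(j:ℕ)+1, hjn⟩ : Fin n) : ℕ) - 1 < n := by
      show (j:ℕ) + 1 - 1 < n
      have := j.isLt; omega
    have e2 := cr_right u i (⟨(j:ℕ)+1, hjn⟩ : Fin n) (by show 0 < Pof μ ((j:ℕ)+1); omega) hj2
    have hjj : j = ⟨((⟨(j:ℕ)+1, hjn⟩ : Fin n) : ℕ) - 1, hj2⟩ :=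
      Fin.ext (by show (j:ℕ) = (j:ℕ) + 1 - 1; omega)
    have e5 : u i j = u i ⟨((⟨(j:ℕ)+1, hjn⟩ : Fin n) : ℕ) - 1, hj2⟩ := by rw [← hjj]
    by_cases hlast : Pof μ (i : ℕ) + 1 < Sof μ (i : ℕ)
    · obtain ⟨hpi, hsi, hin⟩ := succ_PS μ hlast
      have e1 := cr_left u i (⟨(j:ℕ)+1, hjn⟩ : Fin n) hlast hin
      have e4 : u ⟨(i:ℕ)+1, hin⟩ ⟨(j:ℕ)+1, hjn⟩ = 0 := by
        apply ih
        · show Sof μ ((i:ℕ)+1) - 1 - Pof μ ((i:ℕ)+1) ≤ t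
          omega
        · show Pof μ ((i:ℕ)+1) = Pof μ ((j:ℕ)+1)
          omega
        · show Sof μ ((i:ℕ)+1) < Sof μ ((j:ℕ)+1)
          omega
      rw [e4] at e1
      rw [hu, e1] at e2
      rw [e5, ← e2]
    · have e1 : (jordanMat k μ * u) i ⟨(j:ℕ)+1, hjn⟩ = 0 := cr_left0 u i _ hlast
      rw [hu, e1] at e2
      rw [e5, ← e2]

lemma cent_T3 (hu : u * jordanMat k μ = jordanMat k μ * u) (i j : Fin n)
    (hpi : 0 < Pof μ (i : ℕ)) (hpj : 0 < Pof μ (j : ℕ))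
    (hi1 : (i : ℕ) - 1 < n) (hj1 : (j : ℕ) - 1 < n) :
    u i j = u ⟨(i : ℕ) - 1, hi1⟩ ⟨(j : ℕ) - 1, hj1⟩ := by
  have hple := Pof_le μ (i : ℕ)
  obtain ⟨hpi', hsi'⟩ := pred_PS μ hpi
  have hSi := PS_lt μ i.isLt
  have hstep : Pof μ ((⟨(i:ℕ)-1, hi1⟩ : Fin n) : ℕ) + 1 < Sof μ ((⟨(i:ℕ)-1, hi1⟩ : Fin n) : ℕ) := by
    show Pof μ ((i:ℕ)-1) + 1 < Sof μ ((i:ℕ)-1)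
    omega
  have hi2 : ((⟨(i:ℕ)-1, hi1⟩ : Fin n) : ℕ) + 1 < n := by
    show (i:ℕ) - 1 + 1 < n
    have := i.isLt; omega
  have e1 := cr_left u ⟨(i:ℕ)-1, hi1⟩ j hstep hi2
  have e2 : (u * jordanMat k μ) ⟨(i:ℕ)-1, hi1⟩ j = u ⟨(i:ℕ)-1, hi1⟩ ⟨(j:ℕ)-1, hj1⟩ :=
    cr_right u _ j hpj hj1
  rw [← hu, e2] at e1
  have hii : i = ⟨((⟨(i:ℕ)-1, hi1⟩ : Fin n) : ℕ) + 1, hi2⟩ :=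
    Fin.ext (by show (i:ℕ) = (i:ℕ) - 1 + 1; omega)
  have e3 : u i j = u ⟨((⟨(i:ℕ)-1, hi1⟩ : Fin n) : ℕ) + 1, hi2⟩ j := by rw [← hii]
  rw [e3, ← e1]

end Centralizer

lemma enc_inj {n p q s t : ℕ} (hps : p < s) (hqt : q < t) (hs : s ≤ n) (ht : t ≤ n)
    (h : p*(n+1) + (n - s) = q*(n+1) + (n - t)) : p = q ∧ s = t := by
  rcases Nat.lt_trichotomy p q with hpq | hpq | hpq
  · have h1 : (p+1)*(n+1) ≤ q*(n+1) := Nat.mul_le_mul_right _ hpq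
    have h2 : (p+1)*(n+1) = p*(n+1) + (n+1) := by ring
    omega
  · subst hpq; omega
  · have h1 : (q+1)*(n+1) ≤ p*(n+1) := Nat.mul_le_mul_right _ hpq
    have h2 : (q+1)*(n+1) = q*(n+1) + (n+1) := by ring
    omega

lemma enc_lt_cases {n p q s t : ℕ} (hps : p < s) (hqt : q < t) (hs : s ≤ n) (ht : t ≤ n)
    (h : q*(n+1) + (n - t) < p*(n+1) + (n - s)) : q < p ∨ (q = p ∧ s < t) := by
  rcases Nat.lt_trichotomy q p with hpq | hpq | hpq
  · exact Or.inl hpq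
  · subst hpq; right; exact ⟨rfl, by omega⟩
  · exfalso
    have h1 : (p+1)*(n+1) ≤ q*(n+1) := Nat.mul_le_mul_right _ hpq
    have h2 : (p+1)*(n+1) = p*(n+1) + (n+1) := by ring
    omega

def kap {n : ℕ} (μ : Nat.Partition n) (i : Fin n) : ℕ :=
  Pof μ (i : ℕ) * (n+1) + (n - Sof μ (i : ℕ))

section CentDet
variable {k : Type} [Field k] {n : ℕ} {μ : Nat.Partition n}
variable (u : Matrix (Fin n) (Fin n) k)

lemma kap_decode (i : Fin n) (p s : ℕ) (hps : p < s) (hs : s ≤ n)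
    (h : kap μ i = p*(n+1) + (n-s)) : Pof μ (i : ℕ) = p ∧ Sof μ (i : ℕ) = s :=
  enc_inj (PS_lt μ i.isLt) hps (Sof_le μ i.isLt) hs h

lemma cent_BT (hu : u * jordanMat k μ = jordanMat k μ * u) :
    BlockTriangular u (kap μ) := by
  intro i j hij
  have hcase := enc_lt_cases (PS_lt μ i.isLt) (PS_lt μ j.isLt)
    (Sof_le μ i.isLt) (Sof_le μ j.isLt) hij
  rcases hcase with hc | ⟨hc1, hc2⟩
  · exact cent_T1 u hu (Pof μ (j : ℕ)) i j rfl hc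
  · exact cent_T2 u hu (Sof μ (i : ℕ) - 1 - Pof μ (i : ℕ)) i j le_rfl hc1.symm hc2

lemma block_step (hu : u * jordanMat k μ = jordanMat k μ * u)
    (p s : ℕ) (hp : 1 ≤ p) (hps : p < s) (hs : s ≤ n) :
    (u.toSquareBlock (kap μ) (p*(n+1) + (n-s))).det
      = (u.toSquareBlock (kap μ) ((p-1)*(n+1) + (n-s))).det := by
  have decode1 : ∀ i : {i : Fin n // kap μ i = p*(n+1) + (n-s)},
      Pof μ ((i : Fin n) : ℕ) = p ∧ Sof μ ((i : Fin n) : ℕ) = s :=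
    fun i => kap_decode i.1 p s hps hs i.2
  have decode0 : ∀ j : {i : Fin n // kap μ i = (p-1)*(n+1) + (n-s)},
      Pof μ ((j : Fin n) : ℕ) = p - 1 ∧ Sof μ ((j : Fin n) : ℕ) = s :=
    fun j => kap_decode j.1 (p-1) s (by omega) hs j.2
  let E : {i : Fin n // kap μ i = p*(n+1) + (n-s)}
      ≃ {i : Fin n // kap μ i = (p-1)*(n+1) + (n-s)} :=
  { toFun := fun i => ⟨⟨((i : Fin n) : ℕ) - 1, by have := (i : Fin n).isLt; omega⟩, by
      obtain ⟨hP, hS⟩ := decode1 i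
      obtain ⟨h1, h2⟩ := pred_PS μ (i := ((i : Fin n) : ℕ)) (by omega)
      show Pof μ (((i : Fin n) : ℕ) - 1) * (n+1) + (n - Sof μ (((i : Fin n) : ℕ) - 1)) = _
      rw [h1, h2, hP, hS]⟩,
    invFun := fun j => ⟨⟨((j : Fin n) : ℕ) + 1, by
        obtain ⟨hP, hS⟩ := decode0 j
        exact (succ_PS μ (i := ((j : Fin n) : ℕ)) (by omega)).2.2⟩, by
      obtain ⟨hP, hS⟩ := decode0 j
      obtain ⟨h1, h2, h3⟩ := succ_PS μ (i := ((j : Fin n) : ℕ)) (by omega)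
      show Pof μ (((j : Fin n) : ℕ) + 1) * (n+1) + (n - Sof μ (((j : Fin n) : ℕ) + 1)) = _
      rw [h1, h2, hP, hS]
      congr 2
      omega⟩,
    left_inv := fun i => by
      obtain ⟨hP, hS⟩ := decode1 i
      have := Pof_le μ ((i : Fin n) : ℕ)
      apply Subtype.ext
      apply Fin.ext
      show ((i : Fin n) : ℕ) - 1 + 1 = ((i : Fin n) : ℕ)
      omega,
    right_inv := fun j => by
      apply Subtype.ext
      apply Fin.ext
      show ((j : Fin n) : ℕ) + 1 - 1 = ((j : Fin n) : ℕ)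
      omega }
  have hsub : u.toSquareBlock (kap μ) (p*(n+1) + (n-s))
      = (u.toSquareBlock (kap μ) ((p-1)*(n+1) + (n-s))).submatrix E E := by
    ext i j
    obtain ⟨hPi, hSi⟩ := decode1 i
    obtain ⟨hPj, hSj⟩ := decode1 j
    simp only [toSquareBlock_def, submatrix_apply]
    exact cent_T3 u hu i.1 j.1 (by omega) (by omega)
      (by have := (i : Fin n).isLt; omega) (by have := (j : Fin n).isLt; omega)
  rw [hsub, det_submatrix_equiv_self]

lemma block_const (hu : u * jordanMat k μ = jordanMat k μ * u)
    (s : ℕ) (hs : s ≤ n) :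
    ∀ p, p < s → (u.toSquareBlock (kap μ) (p*(n+1) + (n-s))).det
      = (u.toSquareBlock (kap μ) (0*(n+1) + (n-s))).det := by
  intro p
  induction p with
  | zero => intro _; rfl
  | succ p ih =>
    intro hps
    rw [block_step u hu (p+1) s (by omega) hps hs]
    have e : p + 1 - 1 = p := rfl
    rw [e]
    exact ih (by omega)

lemma cent_det (hu : u * jordanMat k μ = jordanMat k μ * u) :
    ∃ c : k, u.det = c ^ μ.parts.gcd := by
  classical
  have hSle : ∀ s ∈ partsList μ, s ≤ n := by
    intro s hsmem
    conv_rhs => rw [← partsList_sum μ]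
    exact List.single_le_sum (fun x _ => Nat.zero_le x) _ hsmem
  rw [(cent_BT u hu).det]
  have himg : Finset.univ.image (kap μ) = (partsList μ).toFinset.biUnion
      (fun s => (Finset.range s).image (fun p => p*(n+1) + (n-s))) := by
    ext a
    simp only [Finset.mem_image, Finset.mem_biUnion, Finset.mem_range, Finset.mem_univ,
      true_and, List.mem_toFinset]
    constructor
    · rintro ⟨i, rfl⟩
      exact ⟨Sof μ (i : ℕ), Sof_mem μ i.isLt, Pof μ (i : ℕ), PS_lt μ i.isLt, rfl⟩
    · rintro ⟨s, hsmem, p, hps, rfl⟩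
      obtain ⟨i0, hi0, hbf⟩ := bf_exists (partsList μ) s p hsmem hps
      rw [partsList_sum] at hi0
      refine ⟨⟨i0, hi0⟩, ?_⟩
      unfold kap
      have hP : Pof μ i0 = p := by unfold Pof; rw [hbf]
      have hS : Sof μ i0 = s := by unfold Sof; rw [hbf]
      rw [show ((⟨i0, hi0⟩ : Fin n) : ℕ) = i0 from rfl, hP, hS]
  rw [himg, Finset.prod_biUnion]
  · have hblock : ∀ s ∈ (partsList μ).toFinset,
        (∏ a ∈ (Finset.range s).image (fun p => p*(n+1) + (n-s)),
          (u.toSquareBlock (kap μ) a).det)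
        = ((u.toSquareBlock (kap μ) (0*(n+1) + (n-s))).det) ^ s := by
      intro s hsmem
      rw [List.mem_toFinset] at hsmem
      rw [Finset.prod_image]
      · rw [Finset.prod_congr rfl (fun p hp => block_const u hu s (hSle s hsmem) p
          (Finset.mem_range.mp hp))]
        rw [Finset.prod_const, Finset.card_range]
      · intro p hp q hq hpq
        exact (enc_inj (Finset.mem_range.mp hp) (Finset.mem_range.mp hq)
          (hSle s hsmem) (hSle s hsmem) hpq).1
    rw [Finset.prod_congr rfl hblock]
    have hdvd : ∀ s ∈ (partsList μ).toFinset, μ.parts.gcd ∣ s := by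
      intro s hsmem
      rw [List.mem_toFinset] at hsmem
      apply Multiset.gcd_dvd
      rw [← partsList_coe μ]
      exact hsmem
    refine ⟨∏ s ∈ (partsList μ).toFinset,
      ((u.toSquareBlock (kap μ) (0*(n+1) + (n-s))).det) ^ (s / μ.parts.gcd), ?_⟩
    rw [← Finset.prod_pow]
    apply Finset.prod_congr rfl
    intro s hsmem
    rw [← pow_mul, Nat.div_mul_cancel (hdvd s hsmem)]
  · -- pairwise disjointness
    intro s hs t ht hst
    apply Finset.disjoint_left.mpr
    intro a ha hb
    simp only [Finset.mem_image, Finset.mem_range] at ha hb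
    obtain ⟨p, hp, rfl⟩ := ha
    obtain ⟨q, hq, he⟩ := hb
    simp only [Finset.mem_coe, List.mem_toFinset] at hs ht
    exact hst (((enc_inj hq hp (hSle t ht) (hSle s hs) he).2).symm)

end CentDet

lemma prod_zpow_sum {k : Type} [Field k] {α : Type} (b : k) (hb : b ≠ 0)
    (s : Finset α) (f : α → ℤ) :
    ∏ a ∈ s, b ^ f a = b ^ (∑ a ∈ s, f a) := by
  induction s using Finset.cons_induction with
  | empty => simp
  | cons a s ha ih => rw [Finset.prod_cons, Finset.sum_cons, ih, ← zpow_add₀ hb]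

section Exists
variable {k : Type} [Field k] {n : ℕ} (μ : Nat.Partition n)

lemma exists_commuting_det (b : k) (hb : b ≠ 0) :
    ∃ z : Matrix (Fin n) (Fin n) k, (z * jordanMat k μ = jordanMat k μ * z) ∧
      z.det = b ^ μ.parts.gcd := by
  obtain ⟨W, hW⟩ := bf_bezout (partsList μ) (fun s hs => partsList_pos μ hs)
  rw [partsList_sum μ, partsList_gcd μ] at hW
  have hPof : ∀ x : ℕ, (blockFind (partsList μ) x).2 = Pof μ x := fun _ => rfl
  simp only [hPof] at hW
  refine ⟨diagonal (fun i : Fin n => b ^ (W ((i : ℕ) - Pof μ (i : ℕ)))), ?_, ?_⟩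
  · ext i j
    rw [diagonal_mul, mul_diagonal, jordan_entry']
    by_cases hc : ((j : ℕ) = (i : ℕ) + 1 ∧ Pof μ (i : ℕ) + 1 < Sof μ (i : ℕ))
    · rw [if_pos hc, mul_one, one_mul]
      obtain ⟨h1, h2, h3⟩ := succ_PS μ hc.2
      have hple := Pof_le μ (i : ℕ)
      congr 1
      rw [hc.1, h1]
      congr 1
      omega
    · rw [if_neg hc, mul_zero, zero_mul]
  · rw [det_diagonal, prod_zpow_sum b hb]
    rw [Fin.sum_univ_eq_sum_range (fun x => W (x - Pof μ x)) n, hW, zpow_natCast]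

end Exists

lemma multiset_sum_eq_zero (s : Multiset ℕ) (h : ∀ x ∈ s, x = 0) : s.sum = 0 := by
  induction s using Multiset.induction_on with
  | empty => simp
  | cons a s ih =>
    rw [Multiset.sum_cons, h a (Multiset.mem_cons_self a s),
      ih (fun x hx => h x (Multiset.mem_cons_of_mem hx)), add_zero]

lemma rank_conj' {k : Type} [Field k] {n : ℕ} (A M : Matrix (Fin n) (Fin n) k)
    (hA : IsUnit A.det) : (A⁻¹ * M * A).rank = M.rank := by
  have h2 : IsUnit (A⁻¹).det := A.isUnit_nonsing_inv_det hA
  calc (A⁻¹ * M * A).rank = (A⁻¹ * M * A⁻¹⁻¹).rank := by rw [nonsing_inv_nonsing_inv _ hA]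
    _ = M.rank := rank_conj _ _ h2

lemma matrix_conj_pow' {k : Type} [Field k] {n : ℕ} (A M : Matrix (Fin n) (Fin n) k)
    (hA : IsUnit A.det) (r : ℕ) : (A * M * A⁻¹) ^ r = A * M ^ r * A⁻¹ := by
  have h2 : IsUnit (A⁻¹).det := A.isUnit_nonsing_inv_det hA
  calc (A * M * A⁻¹) ^ r = (A⁻¹⁻¹ * M * A⁻¹) ^ r := by rw [nonsing_inv_nonsing_inv _ hA]
    _ = A⁻¹⁻¹ * M ^ r * A⁻¹ := matrix_conj_pow _ _ h2 r
    _ = A * M ^ r * A⁻¹ := by rw [nonsing_inv_nonsing_inv _ hA]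


/-- Over a field of characteristic zero, `J_μ D(d)` and `J_ν D(d')` are
`SL_n(k)`-conjugate iff `μ = ν` and `d·d'⁻¹` is an `m`-th power, `m = gcd(μ)`. -/
theorem stmt5 (k : Type) [Field k] [CharZero k] (n : ℕ) (hn : 2 ≤ n)
    (μ ν : Nat.Partition n) (d d' : k) (hd : d ≠ 0) (hd' : d' ≠ 0) :
    SLConj k (jordanMat k μ * Dmat k n d) (jordanMat k ν * Dmat k n d') ↔
      (μ = ν ∧ ∃ c : k, c ≠ 0 ∧ d * d'⁻¹ = c ^ μ.parts.gcd) := by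
  have hUd : IsUnit (Dmat k n d).det := Dmat_isUnit k d hd
  have hUd' : IsUnit (Dmat k n d').det := Dmat_isUnit k d' hd'
  have hDdet : (Dmat k n d).det = d := by rw [Dmat_det, if_neg (by omega), pow_one]
  have hDdet' : (Dmat k n d').det = d' := by rw [Dmat_det, if_neg (by omega), pow_one]
  have hm : μ.parts.gcd ≠ 0 := by
    intro h0
    have hz : ∀ x ∈ μ.parts, x = 0 := (Multiset.gcd_eq_zero_iff _).mp h0
    have hsum : μ.parts.sum = 0 := multiset_sum_eq_zero _ hz
    rw [μ.parts_sum] at hsum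
    omega
  constructor
  · rintro ⟨g, hgdet, hconj⟩
    have hgU : IsUnit g.det := by rw [hgdet]; exact isUnit_one
    have hμν : μ = ν := by
      apply partition_eq_of_trunc_sums
      intro r
      have lms : ∀ (τ : Nat.Partition n) (f : ℕ → ℕ),
          ((partsList τ).map f).sum = (τ.parts.map f).sum := by
        intro τ f
        rw [← partsList_coe τ]
        simp [Multiset.map_coe, Multiset.sum_coe]
      rw [← lms μ _, ← lms ν _, ← rank_jpow k μ r, ← rank_jpow k ν r]
      have hXr : (jordanMat k μ * Dmat k n d) ^ r
          = (Dmat k n d)⁻¹ * (jordanMat k μ) ^ r * Dmat k n d := by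
        rw [jordan_Dmat_conj k μ d hd, matrix_conj_pow _ _ hUd r]
      have hYr : (jordanMat k ν * Dmat k n d') ^ r
          = (Dmat k n d')⁻¹ * (jordanMat k ν) ^ r * Dmat k n d' := by
        rw [jordan_Dmat_conj k ν d' hd', matrix_conj_pow _ _ hUd' r]
      have hgr : (jordanMat k ν * Dmat k n d') ^ r
          = g * (jordanMat k μ * Dmat k n d) ^ r * g⁻¹ := by
        rw [← hconj, matrix_conj_pow' _ _ hgU r]
      have e1 : (jordanMat k μ ^ r).rank = ((jordanMat k μ * Dmat k n d) ^ r).rank := by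
        rw [hXr, rank_conj' _ _ hUd]
      have e2 : (jordanMat k ν ^ r).rank = ((jordanMat k ν * Dmat k n d') ^ r).rank := by
        rw [hYr, rank_conj' _ _ hUd']
      rw [e1, e2, hgr, rank_conj _ _ hgU]
    subst hμν
    refine ⟨rfl, ?_⟩
    have hDdinvJ : (Dmat k n d)⁻¹ * jordanMat k μ = jordanMat k μ := by
      conv_lhs => rw [← Dmat_mul_jordan k μ d]
      rw [← mul_assoc, Dmat_inv_mul k d hd, one_mul]
    have E2 : g * (jordanMat k μ * Dmat k n d) = jordanMat k μ * Dmat k n d' * g := by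
      rw [← hconj, nonsing_inv_mul_cancel_right _ _ hgU]
    set u := Dmat k n d' * g * (Dmat k n d)⁻¹ with hu_def
    have hcomm : u * jordanMat k μ = jordanMat k μ * u := by
      calc u * jordanMat k μ
          = Dmat k n d' * g * ((Dmat k n d)⁻¹ * jordanMat k μ) := by
            rw [hu_def, mul_assoc (Dmat k n d' * g)]
        _ = Dmat k n d' * g * jordanMat k μ := by rw [hDdinvJ]
        _ = Dmat k n d' * g * (jordanMat k μ * Dmat k n d * (Dmat k n d)⁻¹) := by
            rw [mul_nonsing_inv_cancel_right _ _ hUd]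
        _ = Dmat k n d' * (g * (jordanMat k μ * Dmat k n d)) * (Dmat k n d)⁻¹ := by
            simp only [mul_assoc]
        _ = Dmat k n d' * (jordanMat k μ * Dmat k n d' * g) * (Dmat k n d)⁻¹ := by rw [E2]
        _ = jordanMat k μ * u := by
            rw [hu_def]
            simp only [← mul_assoc]
            rw [Dmat_mul_jordan k μ d']
    obtain ⟨c0, hc0⟩ := cent_det u hcomm
    have hudet : u.det = d' * d⁻¹ := by
      rw [hu_def, det_mul, det_mul, hDdet', hgdet, mul_one, det_nonsing_inv, hDdet,
        Ring.inverse_eq_inv]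
    have hc0ne : c0 ≠ 0 := by
      intro h0
      rw [h0, zero_pow hm, hudet] at hc0
      exact (mul_ne_zero hd' (inv_ne_zero hd)) hc0
    refine ⟨c0⁻¹, inv_ne_zero hc0ne, ?_⟩
    rw [inv_pow, ← hc0, hudet, mul_inv, inv_inv, mul_comm]
  · rintro ⟨hμν, c, hc, hcm⟩
    subst hμν
    obtain ⟨z, hzcomm, hzdet⟩ := exists_commuting_det μ c⁻¹ (inv_ne_zero hc)
    have hzU : IsUnit z.det := by
      rw [hzdet]
      exact isUnit_iff_ne_zero.mpr (pow_ne_zero _ (inv_ne_zero hc))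
    refine ⟨(Dmat k n d')⁻¹ * z * Dmat k n d, ?_, ?_⟩
    · rw [det_mul, det_mul, det_nonsing_inv, hDdet', hDdet, hzdet, Ring.inverse_eq_inv,
        inv_pow, ← hcm]
      field_simp
    · have hinv : ((Dmat k n d')⁻¹ * z * Dmat k n d)⁻¹
          = (Dmat k n d)⁻¹ * z⁻¹ * Dmat k n d' := by
        rw [Matrix.mul_inv_rev, Matrix.mul_inv_rev, nonsing_inv_nonsing_inv _ hUd', ← mul_assoc]
      rw [hinv, jordan_Dmat_conj k μ d hd, jordan_Dmat_conj k μ d' hd']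
      simp only [mul_assoc]
      rw [mul_nonsing_inv_cancel_left _ _ hUd, mul_nonsing_inv_cancel_left _ _ hUd,
        ← mul_assoc z, hzcomm, mul_assoc, mul_nonsing_inv_cancel_left _ _ hzU]
end

section
/- Let k be a field of characteristic zero, N, m ≥ 1, and Q ∈ M_m(k) an invertible symmetric matrix. Set A = J_N ⊗ I_m ∈ M_{Nm}(k) (Kronecker product of the N×N Jordan block with the m×m identity), let S ∈ M_{Nm}(k) be the block-diagonal matrix diag(0_{(N−1)m}, (−1)^N Q) (an (N−1)m×(N−1)m zero block followed by (−1)^N Q), and let X = [[A, S],[0, −A^T]] ∈ M_{2Nm}(k). Then: (1) X ∈ sp_{2Nm}(k); (2) X is nilpotent with Jordan type consisting of exactly m parts all equal to 2N, i.e., rank(X^i) = (2N − i)·m for 0 ≤ i ≤ 2N; and (3) for the standard symplectic pairing ⟨x, y⟩ = x^T J y on k^{2Nm}, the m×m matrix with (a, b) entry ⟨e_{Nm+a}, X^{2N−1} e_{Nm+b}⟩ (1 ≤ a, b ≤ m, where e_i is the i-th standard basis vector) equals Q. -/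
open Matrix

/-- `J_N ⊗ I_m`: the Kronecker product of the `N × N` Jordan block with the `m × m`
identity, on the index set `Fin N × Fin m` (row-major flattening `(a, b) ↦ a·m + b`). -/
def kronJordan (k : Type) [Field k] (N m : ℕ) :
    Matrix (Fin N × Fin m) (Fin N × Fin m) k :=
  fun p q => if (q.1 : ℕ) = (p.1 : ℕ) + 1 ∧ p.2 = q.2 then 1 else 0

/-- The block-diagonal matrix `diag(0_{(N-1)m}, (-1)^N Q)`. -/
def cornerBlock (k : Type) [Field k] (N m : ℕ) (Q : Matrix (Fin m) (Fin m) k) :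
    Matrix (Fin N × Fin m) (Fin N × Fin m) k :=
  fun p q =>
    if (p.1 : ℕ) = N - 1 ∧ (q.1 : ℕ) = N - 1 then (-1 : k) ^ N * Q p.2 q.2 else 0

/-- The standard symplectic matrix `[[0, I], [-I, 0]]` on an index set `ι ⊕ ι`. -/
def sympJblocks (k : Type) [Field k] (ι : Type) [Fintype ι] [DecidableEq ι] :
    Matrix (ι ⊕ ι) (ι ⊕ ι) k :=
  Matrix.fromBlocks 0 1 (-1) 0

namespace Stmt12Aux
variable (k : Type) [Field k]




lemma rank_partialPerm {ρ : Type} [Fintype ρ] [DecidableEq ρ] (f : ρ → Option ρ)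
    (hinj : ∀ r r' c, f r = some c → f r' = some c → r = r') :
    (Matrix.of fun r c => if f r = some c then (1 : k) else 0).rank
      = Fintype.card {r // (f r).isSome} := by
  classical
  set M : Matrix ρ ρ k := Matrix.of fun r c => if f r = some c then (1 : k) else 0 with hM
  set d : ρ → k := fun r => if (f r).isSome then 1 else 0 with hd
  have h1 : M * Mᵀ = Matrix.diagonal d := by
    ext r r'
    rw [Matrix.mul_apply, Matrix.diagonal_apply]
    rcases hfr : f r with _ | c0
    · rw [Finset.sum_eq_zero, eq_comm]
      · split_ifs with h
        · subst h; simp [hd, hfr]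
        · rfl
      · intro c _
        simp [hM, hfr]
    · rw [Fintype.sum_eq_single c0]
      · by_cases hrr : r = r'
        · subst hrr
          simp [hM, hd, hfr]
        · have hne : f r' ≠ some c0 := fun h => hrr (hinj _ _ _ hfr h)
          rw [if_neg hrr]
          simp [hM, hfr, hne]
      · intro c hc
        have hne : f r ≠ some c := by
          rw [hfr]; exact fun h => hc (Option.some.inj h).symm
        simp [hM, hne]
  have h2 : Matrix.diagonal d * M = M := by
    ext r c
    rw [Matrix.diagonal_mul]
    rcases hfr : f r with _ | c0
    · simp [hM, hd, hfr]
    · simp [hd, hfr]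
  have hrk : M.rank = (Matrix.diagonal d).rank := by
    refine le_antisymm ?_ ?_
    · conv_lhs => rw [← h2]
      exact Matrix.rank_mul_le_left _ _
    · rw [← h1]; exact Matrix.rank_mul_le_left _ _
  rw [hrk, Matrix.rank_diagonal]
  apply Fintype.card_congr
  apply Equiv.subtypeEquivRight
  intro r
  by_cases h : (f r).isSome <;> simp [hd, h]



def Ai (N m i : ℕ) : Matrix (Fin N × Fin m) (Fin N × Fin m) k :=
  fun p q => if (q.1 : ℕ) = (p.1 : ℕ) + i ∧ p.2 = q.2 then 1 else 0

def Bw (N m i : ℕ) : Matrix (Fin N × Fin m) (Fin N × Fin m) k :=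
  fun p q => if (p.1 : ℕ) = (q.1 : ℕ) + i ∧ p.2 = q.2 then 1 else 0

def Bi (N m i : ℕ) : Matrix (Fin N × Fin m) (Fin N × Fin m) k :=
  ((-1 : k) ^ i) • Bw k N m i

def Tw (N m i : ℕ) : Matrix (Fin N × Fin m) (Fin N × Fin m) k :=
  fun p q => if (p.1 : ℕ) + (q.1 : ℕ) + i + 1 = 2 * N ∧ p.2 = q.2 then 1 else 0

def Ti (N m : ℕ) (Q : Matrix (Fin m) (Fin m) k) (i : ℕ) :
    Matrix (Fin N × Fin m) (Fin N × Fin m) k :=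
  fun p q => if (p.1 : ℕ) + (q.1 : ℕ) + i + 1 = 2 * N then
    (-1 : k) ^ (i + (p.1 : ℕ)) * Q p.2 q.2 else 0

variable {N m : ℕ} (Q : Matrix (Fin m) (Fin m) k)

lemma Ai_mul_Ai (i : ℕ) : Ai k N m i * Ai k N m 1 = Ai k N m (i + 1) := by
  ext p q
  rw [Matrix.mul_apply]
  simp only [Ai]
  rcases lt_or_ge ((p.1 : ℕ) + i) N with h | h
  · rw [Fintype.sum_eq_single ((⟨(p.1 : ℕ) + i, h⟩ : Fin N), p.2)]
    · have := q.1.isLt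
      split_ifs with h1 h2 h2 <;> simp_all <;> omega
    · rintro ⟨r1, r2⟩ hr
      have : ¬((r1 : ℕ) = (p.1 : ℕ) + i ∧ p.2 = r2) := by
        rintro ⟨h1, h2⟩
        exact hr (by subst h2; exact congrArg₂ _ (Fin.ext h1) rfl)
      rw [if_neg this, zero_mul]
  · rw [Finset.sum_eq_zero, eq_comm, if_neg]
    · have := q.1.isLt; omega
    · rintro ⟨r1, r2⟩ _
      have : ¬((r1 : ℕ) = (p.1 : ℕ) + i ∧ p.2 = r2) := by
        rintro ⟨h1, _⟩; have := r1.isLt; omega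
      rw [if_neg this, zero_mul]


lemma Bw_mul_Bw (i : ℕ) : Bw k N m i * Bw k N m 1 = Bw k N m (i + 1) := by
  ext p q
  rw [Matrix.mul_apply]
  simp only [Bw]
  rcases lt_or_ge ((q.1 : ℕ) + 1) N with h | h
  · rw [Fintype.sum_eq_single ((⟨(q.1 : ℕ) + 1, h⟩ : Fin N), q.2)]
    · have := p.1.isLt
      split_ifs with h1 h2 h2 <;> simp_all <;> omega
    · rintro ⟨r1, r2⟩ hr
      have : ¬((r1 : ℕ) = (q.1 : ℕ) + 1 ∧ r2 = q.2) := by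
        rintro ⟨h1, h2⟩
        exact hr (by subst h2; exact congrArg₂ _ (Fin.ext h1) rfl)
      rw [if_neg this, mul_zero]
  · rw [Finset.sum_eq_zero, eq_comm, if_neg]
    · have := p.1.isLt; omega
    · rintro ⟨r1, r2⟩ _
      have : ¬((r1 : ℕ) = (q.1 : ℕ) + 1 ∧ r2 = q.2) := by
        rintro ⟨h1, _⟩; have := r1.isLt; omega
      rw [if_neg this, mul_zero]

lemma Ai_mul_corner (i : ℕ) :
    Ai k N m i * cornerBlock k N m Q =
      fun p q => if (p.1 : ℕ) + i + 1 = N ∧ (q.1 : ℕ) + 1 = N then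
        (-1 : k) ^ N * Q p.2 q.2 else 0 := by
  ext p q
  rw [Matrix.mul_apply]
  simp only [Ai, cornerBlock]
  rcases lt_or_ge ((p.1 : ℕ) + i) N with h | h
  · rw [Fintype.sum_eq_single ((⟨(p.1 : ℕ) + i, h⟩ : Fin N), p.2)]
    · have := q.1.isLt
      split_ifs with h1 h2 h2 <;> simp_all <;> omega
    · rintro ⟨r1, r2⟩ hr
      have : ¬((r1 : ℕ) = (p.1 : ℕ) + i ∧ p.2 = r2) := by
        rintro ⟨h1, h2⟩
        exact hr (by subst h2; exact congrArg₂ _ (Fin.ext h1) rfl)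
      rw [if_neg this, zero_mul]
  · rw [Finset.sum_eq_zero, eq_comm, if_neg]
    · omega
    · rintro ⟨r1, r2⟩ _
      have : ¬((r1 : ℕ) = (p.1 : ℕ) + i ∧ p.2 = r2) := by
        rintro ⟨h1, _⟩; have := r1.isLt; omega
      rw [if_neg this, zero_mul]

lemma Ti_mul_Bw (i : ℕ) :
    Ti k N m Q i * Bw k N m 1 =
      fun p q => if (p.1 : ℕ) + (q.1 : ℕ) + i + 2 = 2 * N ∧ (q.1 : ℕ) + 2 ≤ N then
        (-1 : k) ^ (i + (p.1 : ℕ)) * Q p.2 q.2 else 0 := by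
  ext p q
  rw [Matrix.mul_apply]
  simp only [Ti, Bw]
  rcases lt_or_ge ((q.1 : ℕ) + 1) N with h | h
  · rw [Fintype.sum_eq_single ((⟨(q.1 : ℕ) + 1, h⟩ : Fin N), q.2)]
    · split_ifs with h1 h2 h2 <;> simp_all <;> omega
    · rintro ⟨r1, r2⟩ hr
      have : ¬((r1 : ℕ) = (q.1 : ℕ) + 1 ∧ r2 = q.2) := by
        rintro ⟨h1, h2⟩
        exact hr (by subst h2; exact congrArg₂ _ (Fin.ext h1) rfl)
      rw [if_neg this, mul_zero]
  · rw [Finset.sum_eq_zero, eq_comm, if_neg]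
    · omega
    · rintro ⟨r1, r2⟩ _
      have : ¬((r1 : ℕ) = (q.1 : ℕ) + 1 ∧ r2 = q.2) := by
        rintro ⟨h1, _⟩; have := r1.isLt; omega
      rw [if_neg this, mul_zero]

lemma step_topright (i : ℕ) :
    Ai k N m i * cornerBlock k N m Q + Ti k N m Q i * Bi k N m 1 =
      Ti k N m Q (i + 1) := by
  have : Ti k N m Q i * Bi k N m 1 = ((-1 : k) ^ 1) • (Ti k N m Q i * Bw k N m 1) := by
    rw [Bi, Matrix.mul_smul]
  rw [this, Ai_mul_corner, Ti_mul_Bw]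
  ext p q
  have hp := p.1.isLt; have hq := q.1.isLt
  erw [Matrix.add_apply, Matrix.smul_apply]
  simp only [Matrix.add_apply, Matrix.smul_apply, Ti, pow_one, smul_eq_mul]
  split_ifs with h1 h2 h3 h2 h3 <;>
    first
      | omega
      | (exfalso; omega)
      | (rw [show i + 1 + (p.1 : ℕ) = N by omega]; ring)
      | (rw [show i + 1 + (p.1 : ℕ) = (i + (p.1 : ℕ)) + 1 by omega, pow_succ]; ring)
      | ring



lemma Ai_zero : Ai k N m 0 = 1 := by
  ext p q
  rw [Matrix.one_apply]
  simp only [Ai, add_zero]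
  split_ifs with h1 h2 h2
  · rfl
  · exact absurd (Prod.ext (Fin.ext h1.1.symm) h1.2) h2
  · exact absurd ⟨by rw [h2], by rw [h2]⟩ h1
  · rfl

lemma Bw_zero : Bw k N m 0 = 1 := by
  ext p q
  rw [Matrix.one_apply]
  simp only [Bw, add_zero]
  split_ifs with h1 h2 h2
  · rfl
  · exact absurd (Prod.ext (Fin.ext h1.1) h1.2) h2
  · exact absurd ⟨by rw [h2], by rw [h2]⟩ h1
  · rfl

lemma Bi_zero : Bi k N m 0 = 1 := by rw [Bi, pow_zero, one_smul, Bw_zero]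

lemma kron_eq : kronJordan k N m = Ai k N m 1 := rfl

lemma neg_kron_transpose : -(kronJordan k N m)ᵀ = Bi k N m 1 := by
  ext p q
  simp only [Bi, Matrix.neg_apply, Matrix.transpose_apply, Matrix.smul_apply,
    kronJordan, Bw, pow_one, smul_eq_mul]
  split_ifs with h1 h2 h2
  · ring
  · exact absurd ⟨h1.1, h1.2.symm⟩ h2
  · exact absurd ⟨h2.1, h2.2.symm⟩ h1
  · ring


lemma Bi_mul_Bi (i : ℕ) : Bi k N m i * Bi k N m 1 = Bi k N m (i + 1) := by
  rw [Bi, Bi, Bi, Matrix.smul_mul, Matrix.mul_smul, smul_smul, ← pow_add, Bw_mul_Bw]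

lemma Ti_zero : Ti k N m Q 0 = 0 := by
  ext p q
  have := p.1.isLt; have := q.1.isLt
  simp only [Ti, Matrix.zero_apply]
  rw [if_neg (by omega)]

lemma Ai_eq_zero {i : ℕ} (h : N ≤ i) : Ai k N m i = 0 := by
  ext p q
  have := q.1.isLt
  simp only [Ai, Matrix.zero_apply]
  rw [if_neg (by omega)]

lemma Bi_eq_zero {i : ℕ} (h : N ≤ i) : Bi k N m i = 0 := by
  have : Bw k N m i = 0 := by
    ext p q
    have := p.1.isLt
    simp only [Bw, Matrix.zero_apply]
    rw [if_neg (by omega)]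
  rw [Bi, this, smul_zero]

lemma Ti_eq_zero {i : ℕ} (h : 2 * N ≤ i) : Ti k N m Q i = 0 := by
  ext p q
  simp only [Ti, Matrix.zero_apply]
  rw [if_neg (by omega)]

lemma Xpow (i : ℕ) :
    (fromBlocks (Ai k N m 1) (cornerBlock k N m Q) 0 (Bi k N m 1)) ^ i =
      fromBlocks (Ai k N m i) (Ti k N m Q i) 0 (Bi k N m i) := by
  induction i with
  | zero =>
      rw [pow_zero, Ai_zero, Ti_zero, Bi_zero, fromBlocks_one]
  | succ i ih =>
      rw [pow_succ, ih, fromBlocks_multiply, Matrix.mul_zero, Matrix.mul_zero,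
        Matrix.zero_mul, Matrix.zero_mul, add_zero, add_zero, zero_add,
        Ai_mul_Ai, step_topright, Bi_mul_Bi]

def DlA (N m : ℕ) (Q : Matrix (Fin m) (Fin m) k) (i : ℕ) :
    Matrix (Fin N × Fin m) (Fin N × Fin m) k :=
  fun p q => if (p.1 : ℕ) = (q.1 : ℕ) then
      (if N ≤ (p.1 : ℕ) + i then (-1 : k) ^ (i + (p.1 : ℕ)) * Q p.2 q.2
       else if p.2 = q.2 then 1 else 0)
    else 0

lemma DlA_mul_Ai (i : ℕ) : DlA k N m Q i * Ai k N m i = Ai k N m i := by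
  ext p q
  rw [Matrix.mul_apply, Fintype.sum_prod_type]
  rw [Fintype.sum_eq_single p.1 (fun a ha => ?_)]
  swap
  · refine Finset.sum_eq_zero fun c _ => ?_
    rw [DlA, if_neg (fun h => ha (Fin.ext h.symm)), zero_mul]
  simp only [DlA, if_pos rfl, if_true]
  rcases le_or_gt N ((p.1 : ℕ) + i) with h | h
  · simp only [h, if_true]
    have hq := q.1.isLt
    rw [Finset.sum_eq_zero fun c _ => ?_, eq_comm]
    · rw [Ai, if_neg (by omega)]
    · simp only [Ai]
      rw [if_neg (by omega), mul_zero]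
  · simp only [show ¬N ≤ (p.1 : ℕ) + i from not_le.2 h, if_false]
    simp only [ite_mul, one_mul, zero_mul]
    rw [Finset.sum_ite_eq Finset.univ p.2 (fun c => Ai k N m i (p.1, c) q)]
    simp

lemma DlA_mul_Tw (i : ℕ) : DlA k N m Q i * Tw k N m i = Ti k N m Q i := by
  ext p q
  rw [Matrix.mul_apply, Fintype.sum_prod_type]
  rw [Fintype.sum_eq_single p.1 (fun a ha => ?_)]
  swap
  · refine Finset.sum_eq_zero fun c _ => ?_
    rw [DlA, if_neg (fun h => ha (Fin.ext h.symm)), zero_mul]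
  simp only [DlA, if_pos rfl, if_true]
  have hq := q.1.isLt
  rcases le_or_gt N ((p.1 : ℕ) + i) with h | h
  · simp only [h, if_true]
    by_cases harith : (p.1 : ℕ) + (q.1 : ℕ) + i + 1 = 2 * N
    · have hterm : ∀ c, ((-1 : k) ^ (i + (p.1 : ℕ)) * Q p.2 c) *
          Tw k N m i (p.1, c) q =
          if c = q.2 then (-1 : k) ^ (i + (p.1 : ℕ)) * Q p.2 c else 0 := by
        intro c
        rw [Tw]
        split_ifs with h1 h2 h2
        · rw [mul_one]
        · exact absurd h1.2 h2
        · exact absurd ⟨harith, h2⟩ h1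
        · rw [mul_zero]
      rw [Finset.sum_congr rfl fun c _ => hterm c,
        Finset.sum_ite_eq' Finset.univ q.2
          (fun c => (-1 : k) ^ (i + (p.1 : ℕ)) * Q p.2 c)]
      rw [Ti, if_pos harith]
      simp
    · rw [Finset.sum_eq_zero fun c _ => ?_, eq_comm]
      · rw [Ti, if_neg harith]
      · simp only [Tw]
        rw [if_neg (by tauto), mul_zero]
  · simp only [show ¬N ≤ (p.1 : ℕ) + i from not_le.2 h, if_false]
    simp only [ite_mul, one_mul, zero_mul]
    rw [Finset.sum_ite_eq Finset.univ p.2 (fun x => Tw k N m i (p.1, x) q)]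
    simp only [Finset.mem_univ, if_true]
    simp only [Tw, Ti]
    rw [if_neg (by rintro ⟨h1, -⟩; omega), if_neg (by omega)]

lemma DlA_mul_DlA {R : Matrix (Fin m) (Fin m) k} (hRQ : R * Q = 1) (i : ℕ) :
    DlA k N m R i * DlA k N m Q i = 1 := by
  ext p q
  rw [Matrix.mul_apply, Fintype.sum_prod_type]
  rw [Fintype.sum_eq_single p.1 (fun a ha => ?_)]
  swap
  · refine Finset.sum_eq_zero fun c _ => ?_
    rw [DlA, if_neg (fun h => ha (Fin.ext h.symm)), zero_mul]
  by_cases hpq : (p.1 : ℕ) = (q.1 : ℕ)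
  · have hsign : (-1 : k) ^ (i + (p.1 : ℕ)) * (-1 : k) ^ (i + (p.1 : ℕ)) = 1 := by
      rw [← mul_pow]; norm_num
    have hfin : p.1 = q.1 := Fin.ext hpq
    rcases le_or_gt N ((p.1 : ℕ) + i) with h | h
    · have hterm : ∀ c, DlA k N m R i p (p.1, c) * DlA k N m Q i (p.1, c) q =
          R p.2 c * Q c q.2 := by
        intro c
        simp only [DlA, h, if_true]
        split_ifs <;> first | (rw [mul_mul_mul_comm, hsign, one_mul]) | omega
      rw [Finset.sum_congr rfl fun c _ => hterm c]
      rw [← Matrix.mul_apply, hRQ, Matrix.one_apply, Matrix.one_apply]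
      split_ifs with h1 h2 h2
      · rfl
      · exact absurd (Prod.ext hfin h1) h2
      · exact absurd (congrArg Prod.snd h2) (by simpa using h1)
      · rfl
    · have hterm : ∀ c, DlA k N m R i p (p.1, c) * DlA k N m Q i (p.1, c) q =
          if p.2 = c then (if c = q.2 then 1 else 0) else 0 := by
        intro c
        simp only [DlA, show ¬N ≤ (p.1 : ℕ) + i from not_le.2 h, if_false]
        split_ifs <;> first | ring | omega
      rw [Finset.sum_congr rfl fun c _ => hterm c]
      rw [Finset.sum_ite_eq Finset.univ p.2 (fun c => if c = q.2 then (1:k) else 0)]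
      rw [Matrix.one_apply]
      simp only [Finset.mem_univ, if_true]
      split_ifs with h1 h2 h2
      · rfl
      · exact absurd (Prod.ext hfin h1) h2
      · exact absurd (congrArg Prod.snd h2) h1
      · rfl
  · rw [Finset.sum_eq_zero fun c _ => ?_, eq_comm]
    · rw [Matrix.one_apply, if_neg (fun h => hpq (by rw [h]))]
    · simp only [DlA]
      rw [if_neg hpq, mul_zero]

def ff (N m i : ℕ) :
    (Fin N × Fin m) ⊕ (Fin N × Fin m) → Option ((Fin N × Fin m) ⊕ (Fin N × Fin m))
  | Sum.inl p =>
      if h : (p.1 : ℕ) + i < N then some (Sum.inl (⟨(p.1 : ℕ) + i, h⟩, p.2))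
      else if _h2 : (p.1 : ℕ) + i + 1 ≤ 2 * N then
        some (Sum.inr (⟨2 * N - ((p.1 : ℕ) + i + 1), by
          have := p.1.isLt; omega⟩, p.2))
      else none
  | Sum.inr p =>
      if h : i ≤ (p.1 : ℕ) then
        some (Sum.inr (⟨(p.1 : ℕ) - i, by have := p.1.isLt; omega⟩, p.2))
      else none

lemma ff_inj (N m i : ℕ) :
    ∀ r r' c, ff N m i r = some c → ff N m i r' = some c → r = r' := by
  rintro (p | p) (p' | p') c h h' <;>
    (have hp := p.1.isLt
     have hp' := p'.1.isLt
     simp only [ff] at h h'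
     split_ifs at h h' <;>
       first
         | exact Option.noConfusion h
         | exact Option.noConfusion h'
         | (rw [← h'] at h
            simp only [Option.some.injEq, Sum.inl.injEq, Sum.inr.injEq, Prod.mk.injEq,
              Fin.mk.injEq, reduceCtorEq] at h
            first
              | done
              | exact h.elim
              | (obtain ⟨h1, h2⟩ := h
                 first
                   | exact congrArg Sum.inl (Prod.ext (Fin.ext (by omega)) h2)
                   | exact congrArg Sum.inr (Prod.ext (Fin.ext (by omega)) h2)
                   | (exfalso; omega))))

lemma W_eq (i : ℕ) :
    fromBlocks (Ai k N m i) (Tw k N m i) 0 (Bw k N m i) =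
      Matrix.of (fun r c => if ff N m i r = some c then (1 : k) else 0) := by
  ext r c
  rcases r with p | p <;> rcases c with q | q
  · rw [fromBlocks_apply₁₁, Matrix.of_apply]
    have hq := q.1.isLt
    refine if_congr ?_ rfl rfl
    by_cases h : (p.1 : ℕ) + i < N
    · simp only [Ai, ff, dif_pos h, Option.some.injEq, Sum.inl.injEq, Prod.ext_iff,
        Fin.ext_iff]
      constructor
      · rintro ⟨h1, h2⟩; exact ⟨by omega, h2⟩
      · rintro ⟨h1, h2⟩; exact ⟨by omega, h2⟩
    · by_cases h2 : (p.1 : ℕ) + i + 1 ≤ 2 * N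
      · simp only [ff, dif_neg h, dif_pos h2]
        exact iff_of_false (by rintro ⟨h1, -⟩; omega) (by simp)
      · simp only [ff, dif_neg h, dif_neg h2]
        exact iff_of_false (by rintro ⟨h1, -⟩; omega) (by simp)
  · rw [fromBlocks_apply₁₂, Matrix.of_apply]
    have hq := q.1.isLt
    refine if_congr ?_ rfl rfl
    by_cases h : (p.1 : ℕ) + i < N
    · simp only [Tw, ff, dif_pos h]
      exact iff_of_false (by rintro ⟨h1, -⟩; omega) (by simp)
    · by_cases h2 : (p.1 : ℕ) + i + 1 ≤ 2 * N
      · simp only [Tw, ff, dif_neg h, dif_pos h2, Option.some.injEq, Sum.inr.injEq,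
          Prod.ext_iff, Fin.ext_iff]
        constructor
        · rintro ⟨h1, h2'⟩; exact ⟨by omega, h2'⟩
        · rintro ⟨h1, h2'⟩; exact ⟨by omega, h2'⟩
      · simp only [Tw, ff, dif_neg h, dif_neg h2]
        exact iff_of_false (by rintro ⟨h1, -⟩; omega) (by simp)
  · rw [fromBlocks_apply₂₁, Matrix.of_apply, Matrix.zero_apply, eq_comm]
    rw [if_neg]
    by_cases h : i ≤ (p.1 : ℕ)
    · simp only [ff, dif_pos h]; simp
    · simp only [ff, dif_neg h]; simp
  · rw [fromBlocks_apply₂₂, Matrix.of_apply]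
    have hp := p.1.isLt
    refine if_congr ?_ rfl rfl
    by_cases h : i ≤ (p.1 : ℕ)
    · simp only [Bw, ff, dif_pos h, Option.some.injEq, Sum.inr.injEq, Prod.ext_iff,
        Fin.ext_iff]
      constructor
      · rintro ⟨h1, h2⟩; exact ⟨by omega, h2⟩
      · rintro ⟨h1, h2⟩; exact ⟨by omega, h2⟩
    · simp only [Bw, ff, dif_neg h]
      exact iff_of_false (by rintro ⟨h1, -⟩; omega) (by simp)

def bigD (N m : ℕ) (Q : Matrix (Fin m) (Fin m) k) (i : ℕ) :
    Matrix ((Fin N × Fin m) ⊕ (Fin N × Fin m)) ((Fin N × Fin m) ⊕ (Fin N × Fin m)) k :=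
  fromBlocks (DlA k N m Q i) 0 0 (((-1 : k) ^ i) • 1)

lemma bigD_mul_W (i : ℕ) :
    bigD k N m Q i * fromBlocks (Ai k N m i) (Tw k N m i) 0 (Bw k N m i) =
      fromBlocks (Ai k N m i) (Ti k N m Q i) 0 (Bi k N m i) := by
  rw [bigD, fromBlocks_multiply, DlA_mul_Ai, DlA_mul_Tw]
  simp only [Matrix.zero_mul, Matrix.mul_zero, add_zero, zero_add,
    Matrix.smul_mul, Matrix.one_mul]
  rw [Bi]

lemma bigD_inv {R : Matrix (Fin m) (Fin m) k} (hRQ : R * Q = 1) (i : ℕ) :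
    bigD k N m R i * bigD k N m Q i = 1 := by
  rw [bigD, bigD, fromBlocks_multiply, DlA_mul_DlA k Q hRQ]
  simp only [Matrix.zero_mul, Matrix.mul_zero, add_zero, zero_add, smul_zero,
    Matrix.smul_mul, Matrix.mul_smul, Matrix.one_mul, smul_smul]
  rw [show (-1 : k) ^ i * (-1 : k) ^ i = 1 by rw [← mul_pow]; norm_num, one_smul,
    fromBlocks_one]

lemma rank_W (i : ℕ) :
    (fromBlocks (Ai k N m i) (Tw k N m i) 0 (Bw k N m i)).rank =
      Fintype.card {r // (ff N m i r).isSome} := by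
  rw [W_eq]
  exact rank_partialPerm k (ff N m i) (ff_inj N m i)

lemma rank_Xpow_blocks (hQ : IsUnit Q) (i : ℕ) :
    (fromBlocks (Ai k N m i) (Ti k N m Q i) 0 (Bi k N m i)).rank =
      Fintype.card {r // (ff N m i r).isSome} := by
  have hdet : IsUnit Q.det := (Matrix.isUnit_iff_isUnit_det Q).1 hQ
  have hinv : Q⁻¹ * Q = 1 := Matrix.nonsing_inv_mul Q hdet
  set W : Matrix ((Fin N × Fin m) ⊕ (Fin N × Fin m)) ((Fin N × Fin m) ⊕ (Fin N × Fin m)) k :=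
    fromBlocks (Ai k N m i) (Tw k N m i) 0 (Bw k N m i) with hW
  rw [← bigD_mul_W, ← rank_W k i]
  refine le_antisymm (Matrix.rank_mul_le_right _ _) ?_
  have e : W = bigD k N m Q⁻¹ i * (bigD k N m Q i * W) := by
    rw [← Matrix.mul_assoc, bigD_inv k Q hinv, Matrix.one_mul]
  calc W.rank = (bigD k N m Q⁻¹ i * (bigD k N m Q i * W)).rank := by rw [← e]
    _ ≤ (bigD k N m Q i * W).rank := Matrix.rank_mul_le_right _ _

def finLtEquiv (N c : ℕ) : {a : Fin N // (a : ℕ) < c} ≃ Fin (min N c) where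
  toFun a := ⟨(a.1 : ℕ), by have := a.1.isLt; have := a.2; omega⟩
  invFun b := ⟨⟨(b : ℕ), by have := b.isLt; omega⟩, by
    have := b.isLt
    show (b : ℕ) < c
    omega⟩
  left_inv a := by apply Subtype.ext; apply Fin.ext; rfl
  right_inv b := by apply Fin.ext; rfl

def subProdEquiv {N m : ℕ} (P : Fin N → Prop) :
    {p : Fin N × Fin m // P p.1} ≃ {a : Fin N // P a} × Fin m where
  toFun x := (⟨x.1.1, x.2⟩, x.1.2)
  invFun y := ⟨(y.1.1, y.2), y.1.2⟩
  left_inv x := rfl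
  right_inv y := rfl

lemma card_ff (N m i : ℕ) (hi : i ≤ 2 * N) :
    Fintype.card {r // (ff N m i r).isSome} = (2 * N - i) * m := by
  classical
  have hL : ∀ p : Fin N × Fin m,
      (ff N m i (Sum.inl p)).isSome = true ↔ (p.1 : ℕ) + i + 1 ≤ 2 * N := by
    intro p
    have := p.1.isLt
    by_cases h : (p.1 : ℕ) + i < N
    · simp only [ff, dif_pos h, Option.isSome_some]
      exact iff_of_true trivial (by omega)
    · by_cases h2 : (p.1 : ℕ) + i + 1 ≤ 2 * N
      · simp only [ff, dif_neg h, dif_pos h2, Option.isSome_some]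
        exact iff_of_true trivial h2
      · simp only [ff, dif_neg h, dif_neg h2, Option.isSome_none]
        exact iff_of_false (by simp) h2
  have hR : ∀ p : Fin N × Fin m,
      (ff N m i (Sum.inr p)).isSome = true ↔ i ≤ (p.1 : ℕ) := by
    intro p
    by_cases h : i ≤ (p.1 : ℕ)
    · simp only [ff, dif_pos h, Option.isSome_some]
      exact iff_of_true trivial h
    · simp only [ff, dif_neg h, Option.isSome_none]
      exact iff_of_false (by simp) h
  have e : {r // (ff N m i r).isSome} ≃
      ({a : Fin N // (a : ℕ) + i + 1 ≤ 2 * N} × Fin m) ⊕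
        ({a : Fin N // i ≤ (a : ℕ)} × Fin m) :=
    (Equiv.subtypeSum).trans (Equiv.sumCongr
      ((Equiv.subtypeEquivRight hL).trans (subProdEquiv (fun a : Fin N => (a : ℕ) + i + 1 ≤ 2 * N)))
      ((Equiv.subtypeEquivRight hR).trans (subProdEquiv (fun a : Fin N => i ≤ (a : ℕ)))))
  rw [Fintype.card_congr e]
  rw [Fintype.card_sum, Fintype.card_prod, Fintype.card_prod, Fintype.card_fin]
  have c1 : Fintype.card {a : Fin N // (a : ℕ) + i + 1 ≤ 2 * N} = min N (2 * N - i) := by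
    rw [Fintype.card_congr ((Equiv.subtypeEquivRight (fun a => by
      constructor <;> intro <;> omega)).trans (finLtEquiv N (2 * N - i)))]
    exact Fintype.card_fin _
  have c2 : Fintype.card {a : Fin N // i ≤ (a : ℕ)} = N - min N i := by
    rw [Fintype.card_congr (Equiv.subtypeEquivRight (fun a : Fin N => by
      constructor <;> intro <;> omega : ∀ a : Fin N, i ≤ (a : ℕ) ↔ ¬((a : ℕ) < i)))]
    rw [Fintype.card_subtype_compl]
    congr 1
    · exact Fintype.card_fin N
    · rw [Fintype.card_congr (finLtEquiv N i)]
      exact Fintype.card_fin _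
  rw [c1, c2]
  have : min N (2 * N - i) + (N - min N i) = 2 * N - i := by omega
  rw [← add_mul, this]

end Stmt12Aux

/-- The matrix `X = [[A, S], [0, -Aᵀ]]` with `A = J_N ⊗ I_m` and
`S = diag(0, (-1)^N Q)`: it lies in `sp`, is nilpotent of Jordan type `(2N)^m`, and the
induced form on the lowest weight space is `Q`. -/
theorem stmt12 (k : Type) [Field k] [CharZero k] (N m : ℕ) (hN : 1 ≤ N) (hm : 1 ≤ m)
    (Q : Matrix (Fin m) (Fin m) k) (hQsymm : Q.IsSymm) (hQunit : IsUnit Q) :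
    letI X : Matrix ((Fin N × Fin m) ⊕ (Fin N × Fin m))
        ((Fin N × Fin m) ⊕ (Fin N × Fin m)) k :=
      Matrix.fromBlocks (kronJordan k N m) (cornerBlock k N m Q) 0 (-(kronJordan k N m)ᵀ)
    letI J := sympJblocks k (Fin N × Fin m)
    -- (1) X lies in the symplectic Lie algebra
    (Xᵀ * J + J * X = 0) ∧
    -- (2) X is nilpotent, with Jordan type consisting of m parts all equal to 2N
    IsNilpotent X ∧ (∀ i : ℕ, i ≤ 2 * N → (X ^ i).rank = (2 * N - i) * m) ∧
    -- (3) the pairing ⟨e_{Nm+a}, X^{2N-1} e_{Nm+b}⟩ recovers Q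
    (∀ a b : Fin m,
      (Pi.single (Sum.inr ((⟨0, hN⟩ : Fin N), a)) (1 : k)) ⬝ᵥ
          (J.mulVec ((X ^ (2 * N - 1)).mulVec
            (Pi.single (Sum.inr ((⟨0, hN⟩ : Fin N), b)) (1 : k)))) = Q a b) := by
  classical
  have hS : (cornerBlock k N m Q)ᵀ = cornerBlock k N m Q := by
    ext p q
    simp only [Matrix.transpose_apply, cornerBlock]
    split_ifs with h1 h2 h2
    · rw [hQsymm.apply]
    · exact absurd ⟨h1.2, h1.1⟩ h2
    · exact absurd ⟨h2.2, h2.1⟩ h1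
    · rfl
  refine ⟨?_, ?_, ?_, ?_⟩
  · rw [sympJblocks]
    simp only [fromBlocks_transpose, transpose_neg, transpose_transpose, transpose_zero,
      fromBlocks_multiply, fromBlocks_add, Matrix.mul_zero, Matrix.zero_mul,
      Matrix.mul_one, Matrix.one_mul, Matrix.mul_neg, Matrix.neg_mul,
      add_zero, zero_add, neg_neg, hS]
    rw [← Matrix.fromBlocks_zero]
    congr 1 <;> abel
  · exact ⟨2 * N, by
      rw [Stmt12Aux.neg_kron_transpose, Stmt12Aux.kron_eq, Stmt12Aux.Xpow,
        Stmt12Aux.Ai_eq_zero k (by omega), Stmt12Aux.Ti_eq_zero k Q (le_refl _),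
        Stmt12Aux.Bi_eq_zero k (by omega), Matrix.fromBlocks_zero]⟩
  · intro i hi
    rw [Stmt12Aux.neg_kron_transpose, Stmt12Aux.kron_eq, Stmt12Aux.Xpow,
      Stmt12Aux.rank_Xpow_blocks k Q hQunit i, Stmt12Aux.card_ff N m i hi]
  · intro a b
    rw [Stmt12Aux.neg_kron_transpose, Stmt12Aux.kron_eq, Stmt12Aux.Xpow]
    rw [Matrix.mulVec_single, single_dotProduct, one_mul]
    simp only [Matrix.mulVec, dotProduct, mul_one]
    rw [Fintype.sum_sum_type]
    simp only [sympJblocks, fromBlocks_apply₂₁, fromBlocks_apply₂₂, fromBlocks_apply₁₂,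
      Matrix.zero_apply, zero_mul, Finset.sum_const_zero, add_zero, Matrix.neg_apply,
      Matrix.one_apply]
    rw [Fintype.sum_eq_single ((⟨0, hN⟩ : Fin N), a)]
    · rw [if_pos rfl]
      simp only [Pi.smul_apply, MulOpposite.op_one, one_smul, Matrix.col_apply, fromBlocks_apply₁₂, Stmt12Aux.Ti]
      have hodd : Odd (2 * N - 1) := ⟨N - 1, by omega⟩
      rw [if_pos (by omega), add_zero, hodd.neg_one_pow]
      ring
    · intro r hr
      rw [if_neg (fun h => hr h.symm), neg_zero, zero_mul]
end

section
/- Let n > N ≥ 1 be integers, let r be an irrational real number, let j : {1, …, N} → {1, …, n} be a function with j(i) ≠ i for all i, and let n_1, …, n_N be integers. Suppose there exists x ∈ ℝ^n satisfying x_i − x_{j(i)} = r − n_i for all 1 ≤ i ≤ N and x_1 + x_2 + ⋯ + x_n = 0. Then the N + 1 linear functionals on ℝ^n given by x ↦ x_i − x_{j(i)} (1 ≤ i ≤ N) and x ↦ Σ_{k=1}^n x_k are linearly independent; equivalently, the set of all solutions of the system is an affine subspace of ℝ^n of dimension exactly n − 1 − N. -/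
open Finset

lemma exists_phi_aux (r : ℝ) (hr : Irrational r) :
    ∃ φ : ℝ →ₗ[ℚ] ℝ, φ 1 = 0 ∧ φ r = 1 := by
  have hli : LinearIndependent ℚ ![r, 1] := by
    rw [LinearIndependent.pair_iff]
    intro s t hst
    simp only [Rat.smul_def, mul_one] at hst
    have hs : s = 0 := by
      by_contra hs
      have hs' : (s : ℝ) ≠ 0 := by exact_mod_cast hs
      refine hr ⟨(-t / s : ℚ), ?_⟩
      push_cast
      field_simp
      linarith
    refine ⟨hs, ?_⟩
    have : (t : ℝ) = 0 := by rw [hs] at hst; simpa using hst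
    exact_mod_cast this
  let p : Submodule ℚ ℝ := Submodule.span ℚ (Set.range ![r, 1])
  let b : Module.Basis (Fin 2) ℚ p := Module.Basis.span hli
  let f : p →ₗ[ℚ] ℝ := (Algebra.linearMap ℚ ℝ).comp (b.coord 0)
  obtain ⟨φ, hφ⟩ := LinearMap.exists_extend f
  refine ⟨φ, ?_, ?_⟩
  · have hm : (1 : ℝ) ∈ p := Submodule.subset_span ⟨1, rfl⟩
    have h1 : (⟨(1:ℝ), hm⟩ : p) = b 1 := by
      apply Subtype.ext
      rw [Module.Basis.span_apply]
      simp
    have := LinearMap.congr_fun hφ ⟨(1:ℝ), hm⟩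
    simp only [LinearMap.comp_apply, Submodule.subtype_apply] at this
    rw [this, h1]
    simp [f]
  · have hm : r ∈ p := Submodule.subset_span ⟨0, rfl⟩
    have h1 : (⟨r, hm⟩ : p) = b 0 := by
      apply Subtype.ext
      rw [Module.Basis.span_apply]
      simp
    have := LinearMap.congr_fun hφ ⟨r, hm⟩
    simp only [LinearMap.comp_apply, Submodule.subtype_apply] at this
    rw [this, h1]
    simp [f]

/-- If the inhomogeneous system `x_i - x_{j(i)} = r - n_i` (`1 ≤ i ≤ N`),
`x_1 + ⋯ + x_n = 0` has a solution with `r` irrational, then the `N + 1` linear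
functionals `x ↦ x_i - x_{j(i)}` and `x ↦ ∑ x_k` on `ℝ^n` are linearly independent;
equivalently, the solution set is an affine subspace of dimension `n - 1 - N`. -/
theorem stmt15 (n N : ℕ) (hN : 1 ≤ N) (hNn : N < n)
    (r : ℝ) (hr : Irrational r)
    (j : Fin N → Fin n) (hj : ∀ i : Fin N, j i ≠ Fin.castLE hNn.le i)
    (c : Fin N → ℤ)
    (hsol : ∃ x : Fin n → ℝ,
      (∀ i : Fin N, x (Fin.castLE hNn.le i) - x (j i) = r - (c i : ℝ)) ∧
      (∑ t : Fin n, x t) = 0) :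
    LinearIndependent ℝ (fun o : Option (Fin N) =>
      o.elim (∑ t : Fin n, (LinearMap.proj t : (Fin n → ℝ) →ₗ[ℝ] ℝ))
        (fun i => (LinearMap.proj (Fin.castLE hNn.le i) : (Fin n → ℝ) →ₗ[ℝ] ℝ) -
          LinearMap.proj (j i))) := by
  classical
  obtain ⟨x, hx, -⟩ := hsol
  obtain ⟨φ, φ1, φr⟩ := exists_phi_aux r hr
  set u : Fin n → ℝ := fun k => φ (x k) with hu_def
  have hu : ∀ i : Fin N, u (Fin.castLE hNn.le i) = u (j i) + 1 := by
    intro i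
    have h := congrArg φ (hx i)
    have hc : φ ((c i : ℝ)) = 0 := by
      have h2 : ((c i : ℝ)) = (c i : ℚ) • (1 : ℝ) := by
        rw [Rat.smul_def, mul_one]; push_cast; ring
      rw [h2, map_smul, φ1, smul_zero]
    rw [map_sub, map_sub, hc, φr] at h
    have : u (Fin.castLE hNn.le i) - u (j i) = 1 := by simpa [hu_def] using h
    linarith
  rw [Fintype.linearIndependent_iff]
  intro g hg
  -- pointwise evaluation of the relation
  have hgy : ∀ y : Fin n → ℝ,
      g none * (∑ t : Fin n, y t) +
        ∑ i : Fin N, g (some i) * (y (Fin.castLE hNn.le i) - y (j i)) = 0 := by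
    intro y
    have h := LinearMap.congr_fun hg y
    simp only [LinearMap.sum_apply, LinearMap.smul_apply, LinearMap.zero_apply] at h
    rw [Fintype.sum_option] at h
    simpa [LinearMap.sum_apply, LinearMap.proj_apply, LinearMap.sub_apply,
      smul_eq_mul, mul_sub] using h
  -- first: g none = 0, by evaluating at the all-ones vector
  have hnone : g none = 0 := by
    have h := hgy (fun _ => 1)
    simp at h
    rcases h with h | h
    · exact h
    · exfalso; omega
  -- key coordinate equations: evaluate at basis vectors
  have hkey : ∀ i : Fin N,
      g (some i) = ∑ i' ∈ univ.filter (fun i' => j i' = Fin.castLE hNn.le i),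
        g (some i') := by
    intro i
    have h := hgy (Pi.single (Fin.castLE hNn.le i) 1 : Fin n → ℝ)
    rw [hnone, zero_mul, zero_add] at h
    have hsimp : ∀ i' : Fin N,
        g (some i') * ((Pi.single (Fin.castLE hNn.le i) 1 : Fin n → ℝ) (Fin.castLE hNn.le i')
          - (Pi.single (Fin.castLE hNn.le i) 1 : Fin n → ℝ) (j i'))
        = (if i' = i then g (some i') else 0)
          - (if j i' = Fin.castLE hNn.le i then g (some i') else 0) := by
      intro i'
      rw [Pi.single_apply, Pi.single_apply]
      by_cases h1 : i' = i <;> by_cases h2 : j i' = Fin.castLE hNn.le i <;>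
        simp [h1, h2, Fin.castLE_inj, mul_sub]
    rw [Finset.sum_congr rfl (fun i' _ => hsimp i')] at h
    rw [Finset.sum_sub_distrib, Finset.sum_ite_eq' univ i (fun i' => g (some i')),
      Finset.sum_ite] at h
    simp only [mem_univ, if_true, Finset.sum_const_zero, add_zero] at h
    linarith [h]
  -- measure for induction
  set m : Fin N → ℕ := fun i =>
    (univ.filter (fun i'' => u (Fin.castLE hNn.le i) < u (Fin.castLE hNn.le i''))).card
    with hm_def
  have hlt : ∀ i i' : Fin N, j i' = Fin.castLE hNn.le i → m i' < m i := by
    intro i i' hji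
    have hui' : u (Fin.castLE hNn.le i') = u (Fin.castLE hNn.le i) + 1 := by
      rw [hu i', hji]
    apply Finset.card_lt_card
    constructor
    · intro i'' hi''
      simp only [mem_filter, mem_univ, true_and] at hi'' ⊢
      linarith
    · intro hsub
      have := hsub (by simp only [mem_filter, mem_univ, true_and]; linarith :
        i' ∈ univ.filter (fun i'' => u (Fin.castLE hNn.le i) < u (Fin.castLE hNn.le i'')))
      simp only [mem_filter, mem_univ, true_and] at this
      linarith
  have key : ∀ K : ℕ, ∀ i : Fin N, m i ≤ K → g (some i) = 0 := by
    intro K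
    induction K with
    | zero =>
      intro i hi
      rw [hkey i]
      apply Finset.sum_eq_zero
      intro i' hi'
      simp only [mem_filter, mem_univ, true_and] at hi'
      exact absurd (hlt i i' hi') (by omega)
    | succ K ih =>
      intro i hi
      rw [hkey i]
      apply Finset.sum_eq_zero
      intro i' hi'
      simp only [mem_filter, mem_univ, true_and] at hi'
      exact ih i' (by have := hlt i i' hi'; omega)
  intro o
  match o with
  | none => exact hnone
  | some i => exact key (m i) i le_rfl
end
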